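/- arXiv:1012.1634 — 3 statements merged into one kernel-verified Lean document; each statement's English description precedes it below -/
import Mathlib

section
/- Every entry of a modular invariant for the lattice (torus) chiral data is either 0 or 1. Precisely: let L be an even lattice in R^n, let the primaries be the cosets L*/L with S-matrix S_{[u],[v]} = |L*/L|^{-1/2} exp(2πi u·v), and let Z be a nonnegative-integer matrix indexed by L*/L with Z S = S Z and Z_{[0],[0]} = 1. Then Z_{[u],[v]} ∈ {0,1} for all [u],[v]. -/
/-!
STATEMENT 0: Every entry of a modular invariant for the lattice (torus) chiral
data is either 0 or 1.
-/

open scoped BigOperators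
open Complex

noncomputable section

/-- The Euclidean dot product on `Fin n → ℝ`. -/
def dotR {n : ℕ} (u v : Fin n → ℝ) : ℝ := ∑ i, u i * v i

lemma dotR_add_left {n : ℕ} (u v w : Fin n → ℝ) :
    dotR (u + v) w = dotR u w + dotR v w := by
  simp [dotR, add_mul, Finset.sum_add_distrib]

lemma dotR_neg_left {n : ℕ} (u w : Fin n → ℝ) : dotR (-u) w = -dotR u w := by
  simp [dotR]

lemma dotR_comm {n : ℕ} (u v : Fin n → ℝ) : dotR u v = dotR v u := by
  simp [dotR, mul_comm]

lemma dotR_add_right {n : ℕ} (u v w : Fin n → ℝ) :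
    dotR u (v + w) = dotR u v + dotR u w := by
  rw [dotR_comm, dotR_add_left, dotR_comm v u, dotR_comm w u]

lemma dotR_smul_left {n : ℕ} (a : ℝ) (u w : Fin n → ℝ) :
    dotR (a • u) w = a * dotR u w := by
  simp [dotR, Finset.mul_sum, mul_assoc]

lemma dotR_sub_left {n : ℕ} (u v w : Fin n → ℝ) :
    dotR (u - v) w = dotR u w - dotR v w := by
  rw [sub_eq_add_neg, dotR_add_left, dotR_neg_left]; ring

lemma dotR_zero_left {n : ℕ} (w : Fin n → ℝ) : dotR 0 w = 0 := by simp [dotR]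

lemma dotR_self_nonneg {n : ℕ} (u : Fin n → ℝ) : 0 ≤ dotR u u :=
  Finset.sum_nonneg fun i _ => mul_self_nonneg _

lemma dotR_self_eq_zero {n : ℕ} {u : Fin n → ℝ} (h : dotR u u = 0) : u = 0 := by
  funext i
  have := (Finset.sum_eq_zero_iff_of_nonneg (fun i _ => mul_self_nonneg (u i))).mp h i
    (Finset.mem_univ i)
  have := mul_self_eq_zero.mp this
  simpa using this

/-- dot product as a bilinear form -/
def dotB (n : ℕ) : LinearMap.BilinForm ℝ (Fin n → ℝ) :=
  LinearMap.mk₂ ℝ dotR dotR_add_left dotR_smul_left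
    (fun u v w => dotR_add_right u v w)
    (fun a u w => by rw [smul_eq_mul, dotR_comm, dotR_smul_left, dotR_comm])

@[simp] lemma dotB_apply {n : ℕ} (u v : Fin n → ℝ) : dotB n u v = dotR u v := rfl

lemma dotB_nondeg (n : ℕ) : (dotB n).Nondegenerate := by
  exact ⟨fun x hx => dotR_self_eq_zero (hx x), fun x hx => dotR_self_eq_zero (hx x)⟩

lemma dotB_flip (n : ℕ) : (dotB n).flip = dotB n := by
  apply LinearMap.ext; intro u; apply LinearMap.ext; intro v
  simp [dotR_comm]

/-- `L` is an even lattice: `u ⬝ u ∈ 2ℤ` for all `u ∈ L`. -/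
def IsEvenLattice {n : ℕ} (L : AddSubgroup (Fin n → ℝ)) : Prop :=
  ∀ u ∈ L, ∃ m : ℤ, dotR u u = 2 * m

/-- The dual lattice `L* = {x : x ⬝ L ⊆ ℤ}`. -/
def dualLattice {n : ℕ} (L : AddSubgroup (Fin n → ℝ)) : AddSubgroup (Fin n → ℝ) where
  carrier := {x | ∀ l ∈ L, ∃ m : ℤ, dotR x l = m}
  zero_mem' := fun l _ => ⟨0, by simp [dotR]⟩
  add_mem' := by
    intro a b ha hb l hl
    obtain ⟨m, hm⟩ := ha l hl
    obtain ⟨m', hm'⟩ := hb l hl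
    exact ⟨m + m', by rw [dotR_add_left, hm, hm']; push_cast; ring⟩
  neg_mem' := by
    intro a ha l hl
    obtain ⟨m, hm⟩ := ha l hl
    exact ⟨-m, by rw [dotR_neg_left, hm]; push_cast; ring⟩

/-- The group of primaries `L*/L`. -/
abbrev latQuot {n : ℕ} (L : AddSubgroup (Fin n → ℝ)) :=
  dualLattice L ⧸ (L.addSubgroupOf (dualLattice L))

/-- The class of an element of `L*` in `L*/L`. -/
def mkQ {n : ℕ} (L : AddSubgroup (Fin n → ℝ)) (x : dualLattice L) : latQuot L :=
  QuotientAddGroup.mk x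

section
variable {n : ℕ} (L : AddSubgroup (Fin n → ℝ))

/-- L is discrete. -/
lemma lat_discrete (hEven : IsEvenLattice L) :
    DiscreteTopology (AddSubgroup.toIntSubmodule L) := by
  apply discreteTopology_of_isOpen_singleton_zero
  have : ({0} : Set (AddSubgroup.toIntSubmodule L)) =
      (Subtype.val) ⁻¹' (Metric.ball (0 : Fin n → ℝ) (Real.sqrt (2 / (n + 1)))) := by
    ext ⟨x, hx⟩
    simp only [Set.mem_singleton_iff, Set.mem_preimage, Metric.mem_ball, dist_zero_right]
    constructor
    · intro h
      have : x = 0 := congrArg Subtype.val h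
      subst this
      simp only [norm_zero]
      exact Real.sqrt_pos.mpr (by positivity)
    · intro hlt
      have hxL : x ∈ L := hx
      obtain ⟨m, hm⟩ := hEven x hxL
      by_contra hne
      have hx0 : (x : Fin n → ℝ) ≠ 0 := by
        simpa [Subtype.ext_iff] using hne
      have hpos : 0 < dotR x x := by
        rcases (dotR_self_nonneg x).lt_or_eq with h | h
        · exact h
        · exact absurd (dotR_self_eq_zero h.symm) hx0
      have hm1 : (1 : ℤ) ≤ m := by
        by_contra hm1
        push_neg at hm1
        have : (m : ℝ) ≤ 0 := by exact_mod_cast Int.lt_add_one_iff.mp (by omega)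
        nlinarith [hm, hpos]
      have h2 : (2 : ℝ) ≤ dotR x x := by
        rw [hm]; have : (1:ℝ) ≤ (m:ℝ) := by exact_mod_cast hm1
        linarith
      -- but dotR x x ≤ n * ‖x‖^2 < n * (2/(n+1)) < 2
      have hbound : dotR x x ≤ n * ‖(x : Fin n → ℝ)‖ ^ 2 := by
        have : ∀ i, x i * x i ≤ ‖(x : Fin n → ℝ)‖ ^ 2 := by
          intro i
          have h1 : ‖x i‖ ≤ ‖(x : Fin n → ℝ)‖ := norm_le_pi_norm (x : Fin n → ℝ) i
          have h2 : |x i| ≤ ‖(x : Fin n → ℝ)‖ := h1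
          nlinarith [abs_nonneg (x i), le_abs_self (x i), neg_abs_le (x i)]
        calc dotR x x ≤ ∑ _i : Fin n, ‖(x : Fin n → ℝ)‖ ^ 2 :=
              Finset.sum_le_sum fun i _ => this i
          _ = n * ‖(x : Fin n → ℝ)‖ ^ 2 := by simp [mul_comm]
      have hnorm : ‖(x : Fin n → ℝ)‖ ^ 2 < 2 / (n + 1) := by
        have h0 : (0:ℝ) ≤ ‖(x : Fin n → ℝ)‖ := norm_nonneg _
        nlinarith [hlt, Real.sq_sqrt (show (0:ℝ) ≤ 2 / (n+1) by positivity),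
          Real.sqrt_nonneg (2 / ((n:ℝ)+1))]
      have hlt2 : (n : ℝ) * (2 / (n + 1)) < 2 := by
        rw [mul_div_assoc', div_lt_iff₀ (by positivity : (0:ℝ) < (n:ℝ)+1)]
        nlinarith [Nat.cast_nonneg (α := ℝ) n]
      nlinarith [hbound, hnorm, h2, Nat.cast_nonneg (α := ℝ) n]
  rw [this]
  exact isOpen_induced (Metric.isOpen_ball)
end

section
variable {n : ℕ} (L : AddSubgroup (Fin n → ℝ))

lemma lat_span_top [Fintype (latQuot L)] :
    Submodule.span ℝ ((AddSubgroup.toIntSubmodule L : Submodule ℤ (Fin n → ℝ)) : Set (Fin n → ℝ)) = ⊤ := by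
  by_contra hK
  have hlt : Submodule.span ℝ ((AddSubgroup.toIntSubmodule L : Submodule ℤ (Fin n → ℝ)) : Set (Fin n → ℝ)) < ⊤ :=
    lt_top_iff_ne_top.mpr hK
  obtain ⟨f, hf0, hfmap⟩ := Submodule.exists_dual_map_eq_bot_of_lt_top hlt inferInstance
  set w : Fin n → ℝ := ((dotB n).toDual (dotB_nondeg n)).symm f with hw
  have hBw : ∀ v, dotR w v = f v := by
    intro v
    rw [← dotB_apply, hw]
    exact LinearMap.BilinForm.apply_toDual_symm_apply (B := dotB n) (hB := dotB_nondeg n) f v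
  have hw0 : w ≠ 0 := fun h =>
    hf0 ((LinearEquiv.map_eq_zero_iff _).mp h)
  have hfL : ∀ l ∈ L, f l = 0 := by
    intro l hl
    have : f l ∈ Submodule.map f (Submodule.span ℝ ((AddSubgroup.toIntSubmodule L : Submodule ℤ (Fin n → ℝ)) : Set (Fin n → ℝ))) :=
      Submodule.mem_map_of_mem (Submodule.subset_span hl)
    rw [hfmap] at this
    simpa using this
  -- k • w lies in the dual lattice for each k : ℕ
  have hmem : ∀ k : ℕ, (k : ℝ) • w ∈ dualLattice L := by
    intro k l hl
    refine ⟨0, ?_⟩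
    rw [dotR_smul_left, hBw, hfL l hl]
    simp
  have hinj : Function.Injective (fun k : ℕ => mkQ L ⟨(k : ℝ) • w, hmem k⟩) := by
    intro k j hkj
    have := (QuotientAddGroup.eq (s := L.addSubgroupOf (dualLattice L))).mp hkj
    rw [AddSubgroup.mem_addSubgroupOf] at this
    have h2 : (-(k:ℝ) + (j:ℝ)) • w ∈ L := by
      convert this using 1
      push_cast
      simp [add_smul, neg_smul]
    have h3 := hfL _ h2
    rw [← hBw, dotR_comm, dotR_smul_left] at h3
    have hww : dotR w w ≠ 0 := fun h => hw0 (dotR_self_eq_zero h)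
    have : (-(k:ℝ) + (j:ℝ)) = 0 := by
      rcases mul_eq_zero.mp h3 with h | h
      · exact h
      · exact absurd h hww
    have : (k : ℝ) = (j : ℝ) := by linarith
    exact_mod_cast this
  have : Finite ℕ := Finite.of_injective _ hinj
  exact not_finite ℕ

end

section
variable {n : ℕ} (L : AddSubgroup (Fin n → ℝ))

lemma dual_dual (hEven : IsEvenLattice L) [Fintype (latQuot L)]
    {x : Fin n → ℝ} (hx : ∀ v ∈ dualLattice L, ∃ m : ℤ, dotR x v = m) : x ∈ L := by
  classical
  haveI := lat_discrete L hEven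
  haveI : IsZLattice ℝ (AddSubgroup.toIntSubmodule L) := ⟨lat_span_top L⟩
  let b := Module.Free.chooseBasis ℤ (AddSubgroup.toIntSubmodule L)
  let bR := b.ofZLatticeBasis ℝ (AddSubgroup.toIntSubmodule L)
  have hspan : Submodule.span ℤ (Set.range bR) = AddSubgroup.toIntSubmodule L :=
    b.ofZLatticeBasis_span ℝ
  have hdual : ∀ y : Fin n → ℝ,
      y ∈ (dotB n).dualSubmodule (AddSubgroup.toIntSubmodule L) ↔ y ∈ dualLattice L := by
    intro y
    constructor
    · intro hy l hl
      obtain ⟨m, hm⟩ := Submodule.mem_one.mp (hy l hl)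
      exact ⟨m, by simp only [dotB_apply] at hm; rw [← hm]; simp⟩
    · intro hy z hz
      obtain ⟨m, hm⟩ := hy z hz
      exact Submodule.mem_one.mpr ⟨m, by simpa using hm.symm⟩
  have hkey := (dotB n).dualSubmodule_dualSubmodule_flip_of_basis (R := ℤ) (dotB_nondeg n) bR
  rw [dotB_flip, hspan] at hkey
  have hmem : x ∈ (dotB n).dualSubmodule ((dotB n).dualSubmodule (AddSubgroup.toIntSubmodule L)) := by
    intro y hy
    obtain ⟨m, hm⟩ := hx y ((hdual y).mp hy)
    exact Submodule.mem_one.mpr ⟨m, by simpa using hm.symm⟩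
  rw [hkey] at hmem
  exact hmem

end

/-- The S-matrix of the lattice chiral data:
`S_{[u],[v]} = |L*/L|^{-1/2} exp(2 π i u⬝v)`. -/
def Smat {n : ℕ} (L : AddSubgroup (Fin n → ℝ)) [Fintype (latQuot L)] :
    Matrix (latQuot L) (latQuot L) ℂ := fun x y =>
  (((Real.sqrt (Fintype.card (latQuot L)))⁻¹ : ℝ) : ℂ) *
    Complex.exp (2 * Real.pi * Complex.I *
      (dotR ((Quotient.out x : dualLattice L) : Fin n → ℝ)
            ((Quotient.out y : dualLattice L) : Fin n → ℝ)))


section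
variable {n : ℕ} (L : AddSubgroup (Fin n → ℝ)) [Fintype (latQuot L)]

lemma exp_int (t : ℝ) (m : ℤ) (h : t = m) :
    Complex.exp (2 * Real.pi * Complex.I * t) = 1 := by
  rw [h]
  rw [show ((2:ℂ) * Real.pi * Complex.I * ((m:ℝ):ℂ)) = (m:ℂ) * (2 * Real.pi * Complex.I) by
    push_cast; ring]
  exact Complex.exp_int_mul_two_pi_mul_I m

lemma abs_exp_real (t : ℝ) : ‖Complex.exp (2 * Real.pi * Complex.I * t)‖ = 1 := by
  rw [Complex.norm_exp]
  have : (2 * (Real.pi:ℂ) * Complex.I * (t:ℝ)).re = 0 := by simp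
  rw [this, Real.exp_zero]

/-- the representative of `0` lies in `L`. -/
lemma out_zero_mem : ((Quotient.out (0 : latQuot L) : dualLattice L) : Fin n → ℝ) ∈ L := by
  have h : (QuotientAddGroup.mk (Quotient.out (0 : latQuot L)) : latQuot L) = 0 :=
    Quotient.out_eq _
  rw [QuotientAddGroup.eq_zero_iff] at h
  exact h

lemma out_add_sub_mem (y y' : latQuot L) :
    ((Quotient.out (y + y') : dualLattice L) : Fin n → ℝ)
      - ((Quotient.out y : dualLattice L) : Fin n → ℝ)
      - ((Quotient.out y' : dualLattice L) : Fin n → ℝ) ∈ L := by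
  have h : (QuotientAddGroup.mk (Quotient.out y + Quotient.out y') : latQuot L)
      = QuotientAddGroup.mk (Quotient.out (y + y')) := by
    rw [QuotientAddGroup.mk_add,
      show (QuotientAddGroup.mk (Quotient.out y) : latQuot L) = y from Quotient.out_eq _,
      show (QuotientAddGroup.mk (Quotient.out y') : latQuot L) = y' from Quotient.out_eq _,
      show (QuotientAddGroup.mk (Quotient.out (y + y')) : latQuot L) = y + y' from
        Quotient.out_eq _]
  rw [QuotientAddGroup.eq] at h
  rw [AddSubgroup.mem_addSubgroupOf] at h
  convert h using 1
  push_cast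
  ring

/-- The character sum / orthogonality. -/
lemma sum_char [DecidableEq (latQuot L)] (hEven : IsEvenLattice L) (x z : latQuot L) :
    ∑ y : latQuot L, Complex.exp (2 * Real.pi * Complex.I *
        (dotR (((Quotient.out x : dualLattice L) : Fin n → ℝ)
          - ((Quotient.out z : dualLattice L) : Fin n → ℝ))
          ((Quotient.out y : dualLattice L) : Fin n → ℝ)))
      = if x = z then (Fintype.card (latQuot L) : ℂ) else 0 := by
  classical
  set d : Fin n → ℝ := ((Quotient.out x : dualLattice L) : Fin n → ℝ)
      - ((Quotient.out z : dualLattice L) : Fin n → ℝ) with hd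
  have hdmem : d ∈ dualLattice L := by
    rw [hd, sub_eq_add_neg]
    exact (dualLattice L).add_mem (Quotient.out x).2 ((dualLattice L).neg_mem (Quotient.out z).2)
  -- the character
  have hmul : ∀ y y' : latQuot L,
      Complex.exp (2 * Real.pi * Complex.I *
        (dotR d ((Quotient.out (y + y') : dualLattice L) : Fin n → ℝ)))
      = Complex.exp (2 * Real.pi * Complex.I *
          (dotR d ((Quotient.out y : dualLattice L) : Fin n → ℝ)))
        * Complex.exp (2 * Real.pi * Complex.I *
          (dotR d ((Quotient.out y' : dualLattice L) : Fin n → ℝ))) := by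
    intro y y'
    obtain ⟨m, hm⟩ := hdmem _ (out_add_sub_mem L y y')
    have : ((Quotient.out (y + y') : dualLattice L) : Fin n → ℝ)
        = (((Quotient.out (y + y') : dualLattice L) : Fin n → ℝ)
            - ((Quotient.out y : dualLattice L) : Fin n → ℝ)
            - ((Quotient.out y' : dualLattice L) : Fin n → ℝ))
          + (((Quotient.out y : dualLattice L) : Fin n → ℝ)
            + ((Quotient.out y' : dualLattice L) : Fin n → ℝ)) := by ring
    rw [this, dotR_add_right, dotR_add_right, hm]
    push_cast
    rw [mul_add, Complex.exp_add, mul_add, Complex.exp_add,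
      show (2 * (Real.pi:ℂ) * Complex.I * (m:ℂ)) = (m:ℂ) * (2 * Real.pi * Complex.I) by ring,
      Complex.exp_int_mul_two_pi_mul_I m, one_mul]
  have hzero : Complex.exp (2 * Real.pi * Complex.I *
      (dotR d ((Quotient.out (0 : latQuot L) : dualLattice L) : Fin n → ℝ))) = 1 := by
    obtain ⟨m, hm⟩ := hdmem _ (out_zero_mem L)
    exact exp_int _ m hm
  let ψ : AddChar (latQuot L) ℂ :=
    ⟨fun y => Complex.exp (2 * Real.pi * Complex.I *
        (dotR d ((Quotient.out y : dualLattice L) : Fin n → ℝ))), hzero, hmul⟩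
  by_cases hxz : x = z
  · subst hxz
    have hd0 : d = 0 := by rw [hd]; exact sub_self _
    simp only [hd0, dotR_zero_left]
    simp
  · rw [if_neg hxz]
    have hψ : ψ ≠ 1 := by
      intro h1
      -- then all values are 1, so d pairs integrally with the dual lattice
      have hval : ∀ y : latQuot L, Complex.exp (2 * Real.pi * Complex.I *
          (dotR d ((Quotient.out y : dualLattice L) : Fin n → ℝ))) = 1 := by
        intro y
        have := congrArg (fun ψ : AddChar (latQuot L) ℂ => ψ y) h1
        simpa [ψ] using this
      have hint : ∀ v ∈ dualLattice L, ∃ m : ℤ, dotR d v = m := by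
        intro v hv
        -- v differs from out (mk v) by an element of L
        have houtv : (QuotientAddGroup.mk (Quotient.out (QuotientAddGroup.mk ⟨v, hv⟩ : latQuot L))
            : latQuot L) = QuotientAddGroup.mk ⟨v, hv⟩ := Quotient.out_eq _
        rw [QuotientAddGroup.eq, AddSubgroup.mem_addSubgroupOf] at houtv
        obtain ⟨m₁, hm₁⟩ := hdmem _ houtv
        -- exp(2πi d · out(mk v)) = 1 gives integrality
        have h2 := hval (QuotientAddGroup.mk ⟨v, hv⟩)
        rw [Complex.exp_eq_one_iff] at h2
        obtain ⟨k, hk⟩ := h2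
        have h2πI : (2 * (Real.pi:ℂ) * Complex.I) ≠ 0 := by
          simp [Real.pi_ne_zero, Complex.I_ne_zero]
        have hkr : (dotR d ((Quotient.out (QuotientAddGroup.mk ⟨v, hv⟩ : latQuot L)
            : dualLattice L) : Fin n → ℝ) : ℂ) = (k : ℂ) := by
          apply mul_left_cancel₀ h2πI
          rw [hk]; ring
        have hdot : dotR d ((Quotient.out (QuotientAddGroup.mk ⟨v, hv⟩ : latQuot L)
            : dualLattice L) : Fin n → ℝ) = (k : ℝ) := by exact_mod_cast hkr
        -- now d·v = d·out(mk v) - d·(out(mk v) - v)... note houtv : -out(mk v) + v... careful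
        refine ⟨m₁ + k, ?_⟩
        have hsplit : v = (↑(-(Quotient.out (QuotientAddGroup.mk ⟨v, hv⟩ : latQuot L)))
            + (⟨v, hv⟩ : dualLattice L) : dualLattice L)
            + ((Quotient.out (QuotientAddGroup.mk ⟨v, hv⟩ : latQuot L) : dualLattice L) : Fin n → ℝ) := by
          push_cast
          ring
        rw [hsplit, dotR_add_right, hm₁, hdot]
        push_cast
        ring
      have hdL : d ∈ L := dual_dual L hEven hint
      apply hxz
      have : (QuotientAddGroup.mk (Quotient.out x) : latQuot L)
          = QuotientAddGroup.mk (Quotient.out z) := by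
        rw [QuotientAddGroup.eq, AddSubgroup.mem_addSubgroupOf]
        have : ((-(Quotient.out x) + Quotient.out z : dualLattice L) : Fin n → ℝ) = -d := by
          rw [hd]; push_cast; ring
        rw [this]
        exact L.neg_mem hdL
      rwa [show (QuotientAddGroup.mk (Quotient.out x) : latQuot L) = x from Quotient.out_eq _,
        show (QuotientAddGroup.mk (Quotient.out z) : latQuot L) = z from Quotient.out_eq _] at this
    have := AddChar.sum_eq_zero_of_ne_one hψ
    exact this
end

section
variable {n : ℕ} (L : AddSubgroup (Fin n → ℝ)) [Fintype (latQuot L)]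

open Matrix in
lemma sqrt_card_ne_zero : Real.sqrt (Fintype.card (latQuot L)) ≠ 0 := by
  have : (0:ℝ) < Fintype.card (latQuot L) := by
    exact_mod_cast Fintype.card_pos (α := latQuot L)
  positivity

lemma c_mul_c_card :
    ((Real.sqrt (Fintype.card (latQuot L)))⁻¹ : ℝ)
      * (Real.sqrt (Fintype.card (latQuot L)))⁻¹ * (Fintype.card (latQuot L) : ℝ) = 1 := by
  rw [← mul_inv]
  rw [Real.mul_self_sqrt (by positivity)]
  rw [inv_mul_cancel₀ (by exact_mod_cast Fintype.card_ne_zero (α := latQuot L))]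

lemma conj_exp_real (t : ℝ) :
    (starRingEnd ℂ) (Complex.exp (2 * Real.pi * Complex.I * t))
      = Complex.exp (-(2 * Real.pi * Complex.I * t)) := by
  rw [← Complex.exp_conj]
  congr 1
  apply Complex.ext <;> simp

lemma Smat_abs (x y : latQuot L) :
    ‖Smat L x y‖ = (Real.sqrt (Fintype.card (latQuot L)))⁻¹ := by
  rw [Smat, norm_mul, abs_exp_real, mul_one, Complex.norm_real, Real.norm_eq_abs]
  exact abs_of_nonneg (by positivity)

open Matrix in
lemma Smat_unitary [DecidableEq (latQuot L)] (hEven : IsEvenLattice L) :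
    Smat L * (Smat L)ᴴ = 1 := by
  ext x z
  rw [Matrix.mul_apply, Matrix.one_apply]
  have hterm : ∀ y : latQuot L, Smat L x y * (Smat L)ᴴ y z
      = (((Real.sqrt (Fintype.card (latQuot L)))⁻¹ : ℝ) : ℂ)
        * (((Real.sqrt (Fintype.card (latQuot L)))⁻¹ : ℝ) : ℂ)
        * Complex.exp (2 * Real.pi * Complex.I *
          (dotR (((Quotient.out x : dualLattice L) : Fin n → ℝ)
            - ((Quotient.out z : dualLattice L) : Fin n → ℝ))
            ((Quotient.out y : dualLattice L) : Fin n → ℝ))) := by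
    intro y
    rw [Matrix.conjTranspose_apply, Smat, Smat, RCLike.star_def, _root_.map_mul,
      Complex.conj_ofReal, conj_exp_real, dotR_sub_left]
    push_cast
    rw [mul_sub, Complex.exp_sub, Complex.exp_neg]
    field_simp [Complex.exp_ne_zero]
  rw [Finset.sum_congr rfl (fun y _ => hterm y), ← Finset.mul_sum]
  rw [sum_char L hEven x z]
  by_cases hxz : x = z
  · rw [if_pos hxz, if_pos hxz]
    rw [show ((((Real.sqrt (Fintype.card (latQuot L)))⁻¹ : ℝ) : ℂ)
        * (((Real.sqrt (Fintype.card (latQuot L)))⁻¹ : ℝ) : ℂ)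
        * (Fintype.card (latQuot L) : ℂ))
      = ((((Real.sqrt (Fintype.card (latQuot L)))⁻¹
          * (Real.sqrt (Fintype.card (latQuot L)))⁻¹
          * (Fintype.card (latQuot L) : ℝ) : ℝ)) : ℂ) by push_cast; ring]
    rw [c_mul_c_card]
    norm_num
  · rw [if_neg hxz, if_neg hxz, mul_zero]

end

open Matrix

/-- Every entry of a modular invariant for the lattice chiral data is 0 or 1. -/
theorem stmt_0 {n : ℕ} (L : AddSubgroup (Fin n → ℝ))
    (hEven : IsEvenLattice L) (hLL : L ≤ dualLattice L)
    [Fintype (latQuot L)]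
    (Z : latQuot L → latQuot L → ℕ)
    (hZS : (Matrix.of fun x y => (Z x y : ℂ)) * Smat L
          = Smat L * Matrix.of fun x y => (Z x y : ℂ))
    (hZ0 : Z 0 0 = 1) :
    ∀ x y, Z x y = 0 ∨ Z x y = 1 := by
  classical
  set c : ℝ := (Real.sqrt (Fintype.card (latQuot L)))⁻¹ with hc
  have hc0 : 0 ≤ c := by rw [hc]; positivity
  have hSS := Smat_unitary L hEven
  set Zc : Matrix (latQuot L) (latQuot L) ℂ := Matrix.of fun x y => (Z x y : ℂ) with hZcdef
  have hZc : Zc = Smat L * Zc * (Smat L)ᴴ := by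
    calc Zc = Zc * (Smat L * (Smat L)ᴴ) := by rw [hSS, Matrix.mul_one]
    _ = (Zc * Smat L) * (Smat L)ᴴ := by rw [Matrix.mul_assoc]
    _ = (Smat L * Zc) * (Smat L)ᴴ := by rw [hZS]
  have hentry : ∀ x y : latQuot L, (Z x y : ℂ)
      = ∑ bq : latQuot L, (∑ a : latQuot L, Smat L x a * (Z a bq : ℂ))
          * (starRingEnd ℂ) (Smat L y bq) := by
    intro x y
    have h := congrArg (fun M : Matrix (latQuot L) (latQuot L) ℂ => M x y) hZc
    simpa [Matrix.mul_apply, Matrix.conjTranspose_apply, Finset.sum_mul, RCLike.star_def,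
      Zc] using h
  -- the representative of 0 is in L, so S 0 a = c for all a
  have hS0 : ∀ a : latQuot L, Smat L 0 a = (c : ℂ) := by
    intro a
    rw [Smat]
    obtain ⟨m, hm⟩ := (Quotient.out a : dualLattice L).2 _ (out_zero_mem L)
    rw [dotR_comm] at hm
    rw [exp_int _ m hm, mul_one]
  -- total sum
  set T : ℝ := ∑ bq : latQuot L, (∑ a : latQuot L, c * (Z a bq : ℝ)) * c with hT
  have hT1 : T = 1 := by
    have h := hentry 0 0
    rw [hZ0] at h
    have : ((T : ℝ) : ℂ) = ((1:ℕ) : ℂ) := by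
      rw [h, hT]
      push_cast
      apply Finset.sum_congr rfl
      intro bq _
      simp only [hS0, Complex.conj_ofReal]
    have := Complex.ofReal_injective (by exact_mod_cast this)
    exact_mod_cast this
  intro x y
  have hbound : (Z x y : ℝ) ≤ 1 := by
    rw [← hT1, hT]
    calc (Z x y : ℝ) = ‖((Z x y : ℕ) : ℂ)‖ := by
          rw [Complex.norm_natCast]
      _ = ‖∑ bq : latQuot L, (∑ a : latQuot L, Smat L x a * (Z a bq : ℂ))
            * (starRingEnd ℂ) (Smat L y bq)‖ := by rw [← hentry]
      _ ≤ ∑ bq : latQuot L, ‖(∑ a : latQuot L, Smat L x a * (Z a bq : ℂ))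
            * (starRingEnd ℂ) (Smat L y bq)‖ := norm_sum_le _ _
      _ ≤ ∑ bq : latQuot L, (∑ a : latQuot L, c * (Z a bq : ℝ)) * c := by
          apply Finset.sum_le_sum
          intro bq _
          rw [norm_mul]
          have h1 : ‖∑ a : latQuot L, Smat L x a * (Z a bq : ℂ)‖
              ≤ ∑ a : latQuot L, c * (Z a bq : ℝ) := by
            refine le_trans (norm_sum_le _ _) ?_
            apply Finset.sum_le_sum
            intro a _
            rw [norm_mul, Smat_abs, Complex.norm_natCast, ← hc]
          have h2 : ‖(starRingEnd ℂ) (Smat L y bq)‖ = c := by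
            rw [Complex.norm_conj, Smat_abs, ← hc]
          rw [h2]
          apply mul_le_mul_of_nonneg_right h1 hc0
  have : Z x y ≤ 1 := by exact_mod_cast hbound
  omega

end
end

section
/- Additivity of torus modular invariants: with notation as above, if Z is a nonnegative-integer matrix with ZS = SZ, Z_{[0],[0]}=1, and all entries in {0,1}, then Z_{[u],[v]} = 1 and Z_{[u'],[v']} = 1 imply Z_{[u+u'],[v+v']} = 1. -/
/-!
STATEMENT 1: Additivity of torus modular invariants.

-/

open scoped BigOperators
open Complex

noncomputable section

namespace Stmt1Aux
lemma dotR_comm {n : ℕ} (u v : Fin n → ℝ) : dotR u v = dotR v u := by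
  simp [dotR, mul_comm]
variable {n : ℕ} (L : AddSubgroup (Fin n → ℝ)) (hLL : L ≤ dualLattice L)

/-- the bicharacter -/
def E2 (x y : latQuot L) : ℂ :=
  Complex.exp (2 * Real.pi * Complex.I *
      ((dotR ((Quotient.out x : dualLattice L) : Fin n → ℝ)
            ((Quotient.out y : dualLattice L) : Fin n → ℝ) : ℝ) : ℂ))

lemma exp2pi_int (m : ℤ) : Complex.exp (2 * Real.pi * Complex.I * (m : ℂ)) = 1 := by
  rw [show 2 * (Real.pi:ℂ) * Complex.I * (m:ℂ) = (m:ℂ) * (2 * (Real.pi:ℂ) * Complex.I) by ring]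
  exact Complex.exp_int_mul_two_pi_mul_I m
lemma exp2pi_eq_of_sub_int {r s : ℝ} (m : ℤ) (h : r - s = m) :
    Complex.exp (2 * Real.pi * Complex.I * (r : ℂ)) =
      Complex.exp (2 * Real.pi * Complex.I * (s : ℂ)) := by
  have hr : (r : ℂ) = (s : ℂ) + (m : ℂ) := by
    have : r = s + m := by linarith
    rw [this]; push_cast; ring
  rw [hr, mul_add, Complex.exp_add, exp2pi_int, mul_one]

lemma out_sub_mem (x : latQuot L) (a : dualLattice L) (h : mkQ L a = x) :
    ((Quotient.out x : dualLattice L) : Fin n → ℝ) - (a : Fin n → ℝ) ∈ L := by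
  have h2 : mkQ L (Quotient.out x) = x := Quotient.out_eq x
  have h3 : mkQ L a = mkQ L (Quotient.out x) := by rw [h, h2]
  have h4 : -a + Quotient.out x ∈ L.addSubgroupOf (dualLattice L) :=
    (QuotientAddGroup.eq).mp h3
  have h5 : ((-a + Quotient.out x : dualLattice L) : Fin n → ℝ) ∈ L :=
    (AddSubgroup.mem_addSubgroupOf).mp h4
  have : ((-a + Quotient.out x : dualLattice L) : Fin n → ℝ)
      = (Quotient.out x : dualLattice L) - (a : Fin n → ℝ) := by
    push_cast; ring
  rwa [this] at h5

/-- integrality of dual pairing -/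
lemma dot_int (a : dualLattice L) {l : Fin n → ℝ} (hl : l ∈ L) :
    ∃ m : ℤ, dotR (a : Fin n → ℝ) l = m := a.2 l hl

lemma E2_mk (hLL : L ≤ dualLattice L) (a b : dualLattice L) :
    E2 L (mkQ L a) (mkQ L b) =
      Complex.exp (2 * Real.pi * Complex.I * ((dotR (a : Fin n → ℝ) b : ℝ) : ℂ)) := by
  set a' := ((Quotient.out (mkQ L a) : dualLattice L) : Fin n → ℝ) with ha'
  set b' := ((Quotient.out (mkQ L b) : dualLattice L) : Fin n → ℝ) with hb'
  have hA : a' - (a : Fin n → ℝ) ∈ L := out_sub_mem L _ a rfl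
  have hB : b' - (b : Fin n → ℝ) ∈ L := out_sub_mem L _ b rfl
  obtain ⟨m1, hm1⟩ := dot_int L a hB
  obtain ⟨m2, hm2⟩ := dot_int L b hA
  obtain ⟨m3, hm3⟩ := dot_int L ⟨_, hLL hA⟩ hB
  refine exp2pi_eq_of_sub_int (m1 + m2 + m3) ?_
  have expand : dotR a' b' - dotR (a : Fin n → ℝ) b
      = dotR (a : Fin n → ℝ) (b' - (b:Fin n → ℝ)) + dotR (b : Fin n → ℝ) (a' - (a:Fin n → ℝ))
        + dotR (a' - (a: Fin n → ℝ)) (b' - (b:Fin n → ℝ)) := by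
    simp only [dotR, ← Finset.sum_add_distrib, ← Finset.sum_sub_distrib]
    apply Finset.sum_congr rfl
    intro i _
    simp only [Pi.sub_apply]
    ring
  rw [expand, hm1, hm2]
  rw [show dotR (a' - (a: Fin n → ℝ)) (b' - (b:Fin n → ℝ)) = m3 from hm3]
  push_cast; ring

end Stmt1Aux

namespace Stmt1Aux
variable {n : ℕ} (L : AddSubgroup (Fin n → ℝ))

lemma E2_add_left (hLL : L ≤ dualLattice L) (x y z : latQuot L) :
    E2 L (x + y) z = E2 L x z * E2 L y z := by
  obtain ⟨a, rfl⟩ : ∃ a, mkQ L a = x := ⟨Quotient.out x, Quotient.out_eq x⟩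
  obtain ⟨b, rfl⟩ : ∃ b, mkQ L b = y := ⟨Quotient.out y, Quotient.out_eq y⟩
  obtain ⟨c, rfl⟩ : ∃ c, mkQ L c = z := ⟨Quotient.out z, Quotient.out_eq z⟩
  have hadd : mkQ L a + mkQ L b = mkQ L (a + b) := rfl
  rw [hadd, E2_mk L hLL, E2_mk L hLL, E2_mk L hLL, ← Complex.exp_add]
  congr 1
  have hd : dotR ((a + b : dualLattice L) : Fin n → ℝ) (c : Fin n → ℝ)
      = dotR (a : Fin n → ℝ) c + dotR (b : Fin n → ℝ) c := by
    have : ((a + b : dualLattice L) : Fin n → ℝ) = (a : Fin n → ℝ) + (b : Fin n → ℝ) := rfl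
    rw [this, dotR_add_left]
  rw [hd]; push_cast; ring

lemma E2_comm (x y : latQuot L) : E2 L x y = E2 L y x := by
  unfold E2; rw [dotR_comm]

lemma E2_zero_left (hLL : L ≤ dualLattice L) (y : latQuot L) : E2 L 0 y = 1 := by
  obtain ⟨b, rfl⟩ : ∃ b, mkQ L b = y := ⟨Quotient.out y, Quotient.out_eq y⟩
  have h0 : (0 : latQuot L) = mkQ L 0 := rfl
  rw [h0, E2_mk L hLL]
  have : dotR ((0 : dualLattice L) : Fin n → ℝ) (b : Fin n → ℝ) = 0 := by
    simp [dotR]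
  rw [this]
  simp

lemma E2_add_right (hLL : L ≤ dualLattice L) (x y z : latQuot L) :
    E2 L x (y + z) = E2 L x y * E2 L x z := by
  rw [E2_comm, E2_add_left L hLL, E2_comm L y x, E2_comm L z x]

lemma E2_ne_zero (x y : latQuot L) : E2 L x y ≠ 0 := Complex.exp_ne_zero _

lemma abs_exp2pi (r : ℝ) :
    ‖Complex.exp (2 * Real.pi * Complex.I * (r : ℂ))‖ = 1 := by
  have h : 2 * (Real.pi:ℂ) * Complex.I * (r : ℂ) = ((2 * Real.pi * r : ℝ) : ℂ) * Complex.I := by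
    push_cast; ring
  rw [h, Complex.norm_exp_ofReal_mul_I]

lemma E2_abs (x y : latQuot L) : ‖E2 L x y‖ = 1 := abs_exp2pi _

lemma E2_neg_left (hLL : L ≤ dualLattice L) (x z : latQuot L) :
    E2 L (-x) z = (E2 L x z)⁻¹ := by
  have h := E2_add_left L hLL x (-x) z
  rw [add_neg_cancel, E2_zero_left L hLL] at h
  exact eq_inv_of_mul_eq_one_right h.symm

variable [Fintype (latQuot L)]

lemma sum_E2_zero (hLL : L ≤ dualLattice L) :
    ∑ a, E2 L (0 : latQuot L) a = (Fintype.card (latQuot L) : ℂ) := by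
  simp [E2_zero_left L hLL]

lemma sum_E2_ne (hLL : L ≤ dualLattice L)
    (hnd : ∀ w : latQuot L, (∀ a, E2 L w a = 1) → w = 0) {w : latQuot L} (hw : w ≠ 0) :
    ∑ a, E2 L w a = 0 := by
  have hex : ∃ a₀, E2 L w a₀ ≠ 1 := by
    by_contra hc
    push_neg at hc
    exact hw (hnd w hc)
  obtain ⟨a₀, ha₀⟩ := hex
  have hre : ∑ a, E2 L w (a + a₀) = ∑ a, E2 L w a :=
    Fintype.sum_equiv (Equiv.addRight a₀) _ _ (fun a => rfl)
  have hsplit : ∑ a, E2 L w (a + a₀) = (∑ a, E2 L w a) * E2 L w a₀ := by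
    rw [Finset.sum_mul]
    exact Finset.sum_congr rfl fun a _ => E2_add_right L hLL w a a₀
  have h0 : (∑ a, E2 L w a) * (E2 L w a₀ - 1) = 0 := by
    rw [mul_sub, mul_one, ← hsplit, hre, sub_self]
  rcases mul_eq_zero.mp h0 with h | h
  · exact h
  · exact absurd (sub_eq_zero.mp h) ha₀

end Stmt1Aux


namespace Stmt1Aux
variable {n : ℕ} (L : AddSubgroup (Fin n → ℝ))

lemma main_aux (hLL : L ≤ dualLattice L) [Fintype (latQuot L)]
    (hnd : ∀ w : latQuot L, (∀ a, E2 L w a = 1) → w = 0)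
    (Z : latQuot L → latQuot L → ℕ)
    (hZS : (Matrix.of fun x y => (Z x y : ℂ)) * Smat L
          = Smat L * Matrix.of fun x y => (Z x y : ℂ))
    (hZ0 : Z 0 0 = 1)
    (h01 : ∀ x y, Z x y = 0 ∨ Z x y = 1) :
    ∀ u v u' v' : latQuot L,
      Z u v = 1 → Z u' v' = 1 → Z (u + u') (v + v') = 1 := by
  classical
  have hne : Nonempty (latQuot L) := ⟨0⟩
  set N := Fintype.card (latQuot L) with hN
  have hNpos : 0 < N := Fintype.card_pos
  have hNC : ((N : ℝ) : ℂ) ≠ 0 := by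
    simp only [ne_eq, Complex.ofReal_eq_zero, Nat.cast_eq_zero]
    omega
  set c : ℂ := (((Real.sqrt N)⁻¹ : ℝ) : ℂ) with hcdef
  have hc0 : c ≠ 0 := by
    have : Real.sqrt N > 0 := Real.sqrt_pos.mpr (by positivity)
    simp [hcdef, Complex.ofReal_eq_zero]
    positivity
  have hS : ∀ p q : latQuot L, Smat L p q = c * E2 L p q := fun _ _ => rfl
  -- step 1 : commutation in sum form
  have H1 : ∀ x y : latQuot L,
      ∑ a, (Z x a : ℂ) * E2 L a y = ∑ a, E2 L x a * (Z a y : ℂ) := by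
    intro x y
    have h := congrFun (congrFun hZS x) y
    simp only [Matrix.mul_apply, Matrix.of_apply, hS] at h
    have l1 : ∑ a, (Z x a : ℂ) * (c * E2 L a y) = c * ∑ a, (Z x a : ℂ) * E2 L a y := by
      rw [Finset.mul_sum]
      exact Finset.sum_congr rfl fun a _ => by ring
    have l2 : ∑ a, c * E2 L x a * (Z a y : ℂ) = c * ∑ a, E2 L x a * (Z a y : ℂ) := by
      rw [Finset.mul_sum]
      exact Finset.sum_congr rfl fun a _ => by ring
    rw [l1, l2] at h
    exact mul_left_cancel₀ hc0 h
  -- step 2 : inner orthogonality sum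
  have inner : ∀ a y : latQuot L,
      ∑ b, E2 L a b * (E2 L y b)⁻¹ = if a = y then ((N : ℝ) : ℂ) else 0 := by
    intro a y
    have h1 : ∀ b, E2 L a b * (E2 L y b)⁻¹ = E2 L (a - y) b := by
      intro b
      rw [sub_eq_add_neg, E2_add_left L hLL, E2_neg_left L hLL]
    simp only [h1]
    by_cases hay : a = y
    · subst hay
      rw [if_pos rfl, sub_self]
      simpa using sum_E2_zero L hLL
    · rw [if_neg hay]
      exact sum_E2_ne L hLL hnd (sub_ne_zero.mpr hay)
  -- step 3 : the key identity
  have key : ∀ x y : latQuot L,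
      ∑ p : latQuot L × latQuot L,
        (Z p.1 p.2 : ℂ) * (E2 L x p.1 * (E2 L y p.2)⁻¹) = (Z x y : ℂ) * ((N : ℝ) : ℂ) := by
    intro x y
    rw [Fintype.sum_prod_type]
    have swap1 : ∑ a, ∑ b, (Z a b : ℂ) * (E2 L x a * (E2 L y b)⁻¹)
        = ∑ b, (∑ a, E2 L x a * (Z a b : ℂ)) * (E2 L y b)⁻¹ := by
      rw [Finset.sum_comm]
      exact Finset.sum_congr rfl fun b _ => by
        rw [Finset.sum_mul]
        exact Finset.sum_congr rfl fun a _ => by ring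
    rw [swap1]
    have swap2 : ∑ b, (∑ a, (Z x a : ℂ) * E2 L a b) * (E2 L y b)⁻¹
        = ∑ a, (Z x a : ℂ) * ∑ b, E2 L a b * (E2 L y b)⁻¹ := by
      have e1 : ∑ b, (∑ a, (Z x a : ℂ) * E2 L a b) * (E2 L y b)⁻¹
          = ∑ b, ∑ a, (Z x a : ℂ) * (E2 L a b * (E2 L y b)⁻¹) := by
        exact Finset.sum_congr rfl fun b _ => by
          rw [Finset.sum_mul]
          exact Finset.sum_congr rfl fun a _ => by ring
      rw [e1, Finset.sum_comm]
      exact Finset.sum_congr rfl fun a _ => by rw [Finset.mul_sum]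
    have : ∑ b, (∑ a, E2 L x a * (Z a b : ℂ)) * (E2 L y b)⁻¹
        = ∑ b, (∑ a, (Z x a : ℂ) * E2 L a b) * (E2 L y b)⁻¹ :=
      Finset.sum_congr rfl fun b _ => by rw [H1]
    rw [this, swap2]
    simp only [inner]
    simp only [mul_ite, mul_zero]
    rw [Finset.sum_ite_eq' Finset.univ y (fun a => (Z x a : ℂ) * ((N:ℝ):ℂ))]
    simp
  -- step 4 : total mass
  have hmass : ∑ p : latQuot L × latQuot L, ((Z p.1 p.2 : ℕ) : ℂ) = ((N : ℝ) : ℂ) := by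
    have h := key 0 0
    have e : ∀ p : latQuot L × latQuot L,
        ((Z p.1 p.2 : ℕ) : ℂ) * (E2 L 0 p.1 * (E2 L 0 p.2)⁻¹) = ((Z p.1 p.2 : ℕ) : ℂ) := by
      intro p; rw [E2_zero_left L hLL, E2_zero_left L hLL]; simp
    rw [Finset.sum_congr rfl (fun p _ => e p), hZ0] at h
    simpa using h
  -- step 5 : alignment
  have align : ∀ u v : latQuot L, Z u v = 1 →
      ∀ a b : latQuot L, Z a b = 1 → E2 L u a = E2 L v b := by
    intro u v huv a b hab
    have h := key u v
    rw [huv] at h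
    have habs : ∀ p : latQuot L × latQuot L,
        ‖E2 L u p.1 * (E2 L v p.2)⁻¹‖ = 1 := by
      intro p; rw [norm_mul, norm_inv, E2_abs, E2_abs]; norm_num
    have hre_le : ∀ p ∈ (Finset.univ : Finset (latQuot L × latQuot L)),
        (((Z p.1 p.2 : ℕ) : ℂ) * (E2 L u p.1 * (E2 L v p.2)⁻¹)).re
          ≤ ((Z p.1 p.2 : ℕ) : ℝ) := by
      intro p _
      calc (((Z p.1 p.2 : ℕ) : ℂ) * (E2 L u p.1 * (E2 L v p.2)⁻¹)).re
          ≤ ‖((Z p.1 p.2 : ℕ) : ℂ) * (E2 L u p.1 * (E2 L v p.2)⁻¹)‖ :=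
            Complex.re_le_norm _
        _ = ((Z p.1 p.2 : ℕ) : ℝ) := by
            rw [norm_mul, habs, mul_one, Complex.norm_natCast]
    have hsum_re : ∑ p : latQuot L × latQuot L,
        (((Z p.1 p.2 : ℕ) : ℂ) * (E2 L u p.1 * (E2 L v p.2)⁻¹)).re
          = ∑ p : latQuot L × latQuot L, ((Z p.1 p.2 : ℕ) : ℝ) := by
      rw [← Complex.re_sum, h]
      have h2 : (∑ p : latQuot L × latQuot L, ((Z p.1 p.2 : ℕ) : ℂ)).re
          = ∑ p : latQuot L × latQuot L, ((Z p.1 p.2 : ℕ) : ℝ) := by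
        rw [Complex.re_sum]
        exact Finset.sum_congr rfl fun p _ => by simp
      rw [← h2, hmass]
      simp
    have heach := (Finset.sum_eq_sum_iff_of_le hre_le).mp hsum_re (a, b) (Finset.mem_univ _)
    rw [hab] at heach
    simp only [Nat.cast_one, one_mul] at heach
    -- heach : (E2 L u a * (E2 L v b)⁻¹).re = 1
    set z := E2 L u a * (E2 L v b)⁻¹ with hz
    have hzabs : ‖z‖ = 1 := habs (a, b)
    have hz1 : z = 1 := by
      have h3 : Complex.normSq z = 1 := by
        have h4 := Complex.sq_norm z
        rw [hzabs] at h4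
        simpa using h4.symm
      rw [Complex.normSq_apply] at h3
      have him : z.im = 0 := by nlinarith [h3, heach]
      apply Complex.ext
      · simpa using heach
      · simpa using him
    have hvb : E2 L v b ≠ 0 := E2_ne_zero L v b
    rw [hz] at hz1
    exact (mul_inv_eq_one₀ hvb).mp hz1
  -- step 6 : conclusion
  intro u v u' v' h1 h2
  have h := key (u + u') (v + v')
  have e : ∀ p : latQuot L × latQuot L,
      ((Z p.1 p.2 : ℕ) : ℂ) * (E2 L (u + u') p.1 * (E2 L (v + v') p.2)⁻¹)
        = ((Z p.1 p.2 : ℕ) : ℂ) := by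
    intro p
    rcases h01 p.1 p.2 with h0 | h0
    · rw [h0]; simp
    · have e1 : E2 L (u + u') p.1 = E2 L (v + v') p.2 := by
        rw [E2_add_left L hLL, E2_add_left L hLL,
          align u v h1 p.1 p.2 h0, align u' v' h2 p.1 p.2 h0]
      rw [e1, mul_inv_cancel₀ (E2_ne_zero L _ _), mul_one]
  rw [Finset.sum_congr rfl (fun p _ => e p), hmass] at h
  have h2 : ((Z (u + u') (v + v') : ℕ) : ℂ) * ((N : ℝ) : ℂ) = 1 * ((N : ℝ) : ℂ) := by
    rw [one_mul]; exact h.symm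
  have h3 : ((Z (u + u') (v + v') : ℕ) : ℂ) = 1 := mul_right_cancel₀ hNC h2
  exact_mod_cast h3
end Stmt1Aux

namespace Stmt1Aux
variable {n : ℕ} (L : AddSubgroup (Fin n → ℝ))

lemma mem_toIntSub {M : Type*} [AddCommGroup M] (S : AddSubgroup M) (x : M) :
    x ∈ AddSubgroup.toIntSubmodule S ↔ x ∈ S := Iff.rfl

lemma dotR_smul_left (t : ℝ) (u v : Fin n → ℝ) : dotR (t • u) v = t * dotR u v := by
  simp [dotR, Finset.mul_sum, mul_assoc]

lemma dotR_self_pos {v : Fin n → ℝ} (hv : v ≠ 0) : 0 < dotR v v := by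
  have h1 : 0 ≤ dotR v v := Finset.sum_nonneg fun i _ => mul_self_nonneg _
  rcases h1.lt_or_eq with h | h
  · exact h
  · exfalso
    apply hv
    funext i
    have h2 := (Finset.sum_eq_zero_iff_of_nonneg
      (fun i _ => mul_self_nonneg (v i))).mp h.symm i (Finset.mem_univ i)
    exact mul_self_eq_zero.mp h2

lemma latt_sep (hEven : IsEvenLattice L) {v : Fin n → ℝ} (hv : v ∈ L) (hv0 : v ≠ 0) :
    (2:ℝ) ≤ dotR v v := by
  obtain ⟨m, hm⟩ := hEven v hv
  have hp := dotR_self_pos hv0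
  have hmpos : (0:ℝ) < (m:ℝ) := by nlinarith
  have hm1 : (0:ℤ) < m := by exact_mod_cast hmpos
  have : (1:ℝ) ≤ (m:ℝ) := by exact_mod_cast hm1
  linarith

/-- the dot product as a bilinear form -/
def Bf (n : ℕ) : LinearMap.BilinForm ℝ (Fin n → ℝ) :=
  LinearMap.mk₂ ℝ dotR dotR_add_left (fun t u v => dotR_smul_left t u v)
    (fun u v w => by rw [dotR_comm, dotR_add_left, dotR_comm v u, dotR_comm w u])
    (fun t u v => by rw [dotR_comm, dotR_smul_left, dotR_comm v u]; rfl)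

lemma Bf_apply (u v : Fin n → ℝ) : Bf n u v = dotR u v := rfl

lemma Bf_nondeg : (Bf n).Nondegenerate := by
  refine ⟨fun x hx => ?_, fun x hx => ?_⟩ <;>
  · by_contra h0
    exact absurd (hx x) (ne_of_gt (dotR_self_pos h0))

lemma double_dual (hEven : IsEvenLattice L) [Fintype (latQuot L)]
    (x : Fin n → ℝ) (hx : ∀ y ∈ dualLattice L, ∃ m : ℤ, dotR x y = m) : x ∈ L := by
  rcases Nat.eq_zero_or_pos n with hn | hn
  · subst hn
    have hx0 : x = 0 := funext fun i => Fin.elim0 i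
    rw [hx0]; exact L.zero_mem
  have hn0 : (n:ℝ) ≠ 0 := Nat.cast_ne_zero.mpr (by omega)
  set Lsub : Submodule ℤ (Fin n → ℝ) := AddSubgroup.toIntSubmodule L with hLsub
  haveI hdisc : DiscreteTopology Lsub := by
    apply DiscreteTopology.of_forall_le_norm (r := Real.sqrt (2 / n))
    · have : (0:ℝ) < 2 / n := by positivity
      positivity
    · intro v hv0
      have hvL : (v : Fin n → ℝ) ∈ L := (mem_toIntSub L _).mp v.2
      have hvne : (v : Fin n → ℝ) ≠ 0 := fun h => hv0 (Subtype.ext h)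
      have h2 : (2:ℝ) ≤ dotR (v : Fin n → ℝ) v := latt_sep L hEven hvL hvne
      have hb : dotR (v : Fin n → ℝ) v ≤ n * ‖(v : Fin n → ℝ)‖^2 := by
        have hterm : ∀ i, (v : Fin n → ℝ) i * (v : Fin n → ℝ) i ≤ ‖(v : Fin n → ℝ)‖^2 := by
          intro i
          have h := norm_le_pi_norm (v : Fin n → ℝ) i
          have habs : |(v : Fin n → ℝ) i| ≤ ‖(v : Fin n → ℝ)‖ := by
            simpa [Real.norm_eq_abs] using h
          nlinarith [abs_nonneg ((v : Fin n → ℝ) i), _root_.sq_abs ((v : Fin n → ℝ) i)]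
        calc dotR (v : Fin n → ℝ) v ≤ ∑ _i : Fin n, ‖(v : Fin n → ℝ)‖^2 :=
              Finset.sum_le_sum fun i _ => hterm i
          _ = n * ‖(v : Fin n → ℝ)‖^2 := by
              rw [Finset.sum_const, Finset.card_univ, Fintype.card_fin, nsmul_eq_mul]
      have hq : (2:ℝ)/n ≤ ‖(v : Fin n → ℝ)‖^2 := by
        rw [div_le_iff₀ (by positivity)]
        nlinarith
      have hfin : Real.sqrt (2/n) ≤ ‖(v : Fin n → ℝ)‖ := by
        have := Real.sqrt_le_sqrt hq
        rwa [Real.sqrt_sq (norm_nonneg _)] at this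
      simpa using hfin
  have hspan : Submodule.span ℝ (Lsub : Set (Fin n → ℝ)) = ⊤ := by
    by_contra hne
    obtain ⟨f, hf0, hfbot⟩ := Submodule.exists_dual_map_eq_bot_of_lt_top
      (p := Submodule.span ℝ (Lsub : Set (Fin n → ℝ))) (lt_top_iff_ne_top.mpr hne) inferInstance
    set w := ((Bf n).toDual Bf_nondeg).symm f with hw
    have hw0 : w ≠ 0 := by
      simp only [hw, ne_eq, LinearEquiv.map_eq_zero_iff]
      exact hf0
    have hfw : ∀ y, f y = dotR w y := by
      intro y
      have : (Bf n).toDual Bf_nondeg w = f := LinearEquiv.apply_symm_apply _ f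
      rw [← this]
      rfl
    have hwl : ∀ l ∈ L, dotR w l = 0 := by
      intro l hl
      have hls : l ∈ Submodule.span ℝ (Lsub : Set (Fin n → ℝ)) :=
        Submodule.subset_span (by exact (mem_toIntSub L _).mpr hl)
      have : f l ∈ (⊥ : Submodule ℝ ℝ) := by
        rw [← hfbot]
        exact Submodule.mem_map_of_mem hls
      rw [← hfw]
      simpa using this
    have hww : 0 < dotR w w := dotR_self_pos hw0
    set N := Fintype.card (latQuot L) with hNN
    set ε := Real.sqrt (2 / dotR w w) with hε
    have hεpos : 0 < ε := Real.sqrt_pos.mpr (by positivity)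
    have hmem : ∀ s : ℝ, s • w ∈ dualLattice L := by
      intro s l hl
      exact ⟨0, by rw [dotR_smul_left, hwl l hl, mul_zero]; simp⟩
    set t : Fin (N+1) → ℝ := fun i => (i:ℝ) * (ε / (N+1)) with ht
    have hstep : 0 < ε / (N+1) := by positivity
    set g : Fin (N+1) → latQuot L := fun i => mkQ L ⟨t i • w, hmem (t i)⟩ with hg
    have hginj : Function.Injective g := by
      intro i j hij
      by_contra hne'
      have hdiff : (-(⟨t i • w, hmem (t i)⟩ : dualLattice L)
          + ⟨t j • w, hmem (t j)⟩ : dualLattice L)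
            ∈ L.addSubgroupOf (dualLattice L) := (QuotientAddGroup.eq).mp hij
      have hvL : (t j - t i) • w ∈ L := by
        have h5 := (AddSubgroup.mem_addSubgroupOf).mp hdiff
        have : ((-(⟨t i • w, hmem (t i)⟩ : dualLattice L)
            + ⟨t j • w, hmem (t j)⟩ : dualLattice L) : Fin n → ℝ) = (t j - t i) • w := by
          push_cast
          rw [sub_smul]
          ring
        rwa [this] at h5
      have hd0 : t j - t i ≠ 0 := by
        intro h
        apply hne'
        have : (i:ℝ) * (ε / (N+1)) = (j:ℝ) * (ε / (N+1)) := by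
          simp only [ht] at h ⊢
          linarith
        have hij' : (i:ℝ) = (j:ℝ) := mul_right_cancel₀ (ne_of_gt hstep) this
        exact Fin.ext (by exact_mod_cast hij')
      have hvne : (t j - t i) • w ≠ 0 := smul_ne_zero hd0 hw0
      have h2 : (2:ℝ) ≤ dotR ((t j - t i) • w) ((t j - t i) • w) := latt_sep L hEven hvL hvne
      have hdot : dotR ((t j - t i) • w) ((t j - t i) • w) = (t j - t i)^2 * dotR w w := by
        rw [dotR_smul_left, dotR_comm, dotR_smul_left]
        ring
      have hlt : ∀ k : Fin (N+1), 0 ≤ t k ∧ t k < ε := by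
        intro k
        constructor
        · positivity
        · have hk : (k:ℝ) ≤ N := by
            have := k.2
            exact_mod_cast Nat.lt_succ_iff.mp this
          have h1 : t k ≤ (N:ℝ) * (ε / (N+1)) :=
            mul_le_mul_of_nonneg_right hk (le_of_lt hstep)
          have h2 : (N:ℝ) * (ε / (N+1)) < ((N:ℝ)+1) * (ε / (N+1)) :=
            mul_lt_mul_of_pos_right (by linarith) hstep
          have h3 : ((N:ℝ)+1) * (ε / (N+1)) = ε := by
            field_simp
          linarith
      have hbound : |t j - t i| < ε := by
        obtain ⟨hi0, hi1⟩ := hlt i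
        obtain ⟨hj0, hj1⟩ := hlt j
        rw [abs_sub_lt_iff]
        constructor <;> linarith
      have hsq : (t j - t i)^2 < ε^2 :=
        sq_lt_sq' (abs_lt.mp hbound).1 (abs_lt.mp hbound).2
      have hε2 : ε^2 = 2 / dotR w w := Real.sq_sqrt (by positivity)
      rw [hdot] at h2
      rw [hε2] at hsq
      have : (t j - t i)^2 * dotR w w < 2 := by
        have := mul_lt_mul_of_pos_right hsq hww
        rwa [div_mul_cancel₀ _ (ne_of_gt hww)] at this
      linarith
    have hcard := Fintype.card_le_of_injective g hginj
    rw [Fintype.card_fin] at hcard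
    omega
  haveI : IsZLattice ℝ Lsub := ⟨hspan⟩
  haveI := ZLattice.module_finite ℝ Lsub
  haveI := ZLattice.module_free ℝ Lsub
  set b0 := Module.Free.chooseBasis ℤ Lsub with hb0
  set b := Module.Basis.ofZLatticeBasis ℝ Lsub b0 with hb
  have hbspan : Submodule.span ℤ (Set.range b) = Lsub := b0.ofZLatticeBasis_span ℝ
  have hflip : (Bf n).flip = Bf n := by
    apply LinearMap.ext
    intro u
    apply LinearMap.ext
    intro v
    show dotR v u = dotR u v
    exact dotR_comm v u
  have hdd := LinearMap.BilinForm.dualSubmodule_dualSubmodule_flip_of_basis (R := ℤ) (Bf n) Bf_nondeg b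
  rw [hflip, hbspan] at hdd
  have hid : ∀ z : Fin n → ℝ, z ∈ (Bf n).dualSubmodule Lsub → z ∈ dualLattice L := by
    intro z h l hl
    obtain ⟨m, hm⟩ := Submodule.mem_one.mp (h l ((mem_toIntSub L _).mpr hl))
    exact ⟨m, by simpa [Bf_apply] using hm.symm⟩
  have hxdd : x ∈ (Bf n).dualSubmodule ((Bf n).dualSubmodule Lsub) := by
    intro y hy
    obtain ⟨m, hm⟩ := hx y (hid y hy)
    exact Submodule.mem_one.mpr ⟨m, by simpa [Bf_apply] using hm.symm⟩
  rw [hdd] at hxdd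
  exact (mem_toIntSub L _).mp hxdd

end Stmt1Aux

namespace Stmt1Aux
variable {n : ℕ} (L : AddSubgroup (Fin n → ℝ))

lemma nondeg (hEven : IsEvenLattice L) [Fintype (latQuot L)] :
    ∀ w : latQuot L, (∀ a, E2 L w a = 1) → w = 0 := by
  intro w hw
  have hint : ∀ y ∈ dualLattice L,
      ∃ m : ℤ, dotR ((Quotient.out w : dualLattice L) : Fin n → ℝ) y = m := by
    intro y hy
    set a : latQuot L := mkQ L ⟨y, hy⟩ with ha
    have h1 : E2 L w a = 1 := hw a
    have hterm : ∃ m : ℤ, dotR ((Quotient.out w : dualLattice L) : Fin n → ℝ)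
        ((Quotient.out a : dualLattice L) : Fin n → ℝ) = m := by
      unfold E2 at h1
      obtain ⟨k, hk⟩ := Complex.exp_eq_one_iff.mp h1
      refine ⟨k, ?_⟩
      have h2π : (2 * (Real.pi:ℂ) * Complex.I) ≠ 0 := by
        simpa [mul_comm] using Complex.two_pi_I_ne_zero
      have hr : ((dotR ((Quotient.out w : dualLattice L) : Fin n → ℝ)
          ((Quotient.out a : dualLattice L) : Fin n → ℝ) : ℝ) : ℂ) = (k : ℂ) := by
        apply mul_left_cancel₀ h2π
        rw [hk]; ring
      exact_mod_cast hr
    obtain ⟨m1, hm1⟩ := hterm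
    have hsub : ((Quotient.out a : dualLattice L) : Fin n → ℝ) - y ∈ L :=
      out_sub_mem L a ⟨y, hy⟩ rfl
    obtain ⟨m2, hm2⟩ := (Quotient.out w : dualLattice L).2 _ hsub
    refine ⟨m1 - m2, ?_⟩
    have hsplit : dotR ((Quotient.out w : dualLattice L) : Fin n → ℝ) y
        = dotR ((Quotient.out w : dualLattice L) : Fin n → ℝ)
            ((Quotient.out a : dualLattice L) : Fin n → ℝ)
          - dotR ((Quotient.out w : dualLattice L) : Fin n → ℝ)
            (((Quotient.out a : dualLattice L) : Fin n → ℝ) - y) := by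
      simp only [dotR, ← Finset.sum_sub_distrib]
      apply Finset.sum_congr rfl
      intro i _
      simp only [Pi.sub_apply]
      ring
    rw [hsplit, hm1, hm2]
    push_cast
    ring
  have hmem : ((Quotient.out w : dualLattice L) : Fin n → ℝ) ∈ L :=
    double_dual L hEven _ hint
  have hout : mkQ L (Quotient.out w) = w := Quotient.out_eq w
  rw [← hout]
  exact (QuotientAddGroup.eq_zero_iff _).mpr ((AddSubgroup.mem_addSubgroupOf).mpr hmem)

end Stmt1Aux

/-- Additivity of torus modular invariants: if `Z` is a `{0,1}`-valued
nonnegative-integer matrix commuting with `S` and with `Z_{[0],[0]} = 1`, then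
`Z_{[u],[v]} = 1` and `Z_{[u'],[v']} = 1` imply `Z_{[u+u'],[v+v']} = 1`. -/
theorem stmt_1 {n : ℕ} (L : AddSubgroup (Fin n → ℝ))
    (hEven : IsEvenLattice L) (hLL : L ≤ dualLattice L)
    [Fintype (latQuot L)]
    (Z : latQuot L → latQuot L → ℕ)
    (hZS : (Matrix.of fun x y => (Z x y : ℂ)) * Smat L
          = Smat L * Matrix.of fun x y => (Z x y : ℂ))
    (hZ0 : Z 0 0 = 1)
    (h01 : ∀ x y, Z x y = 0 ∨ Z x y = 1) :
    ∀ u v u' v' : latQuot L,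
      Z u v = 1 → Z u' v' = 1 → Z (u + u') (v + v') = 1 :=
  Stmt1Aux.main_aux L hLL (Stmt1Aux.nondeg L hEven) Z hZS hZ0 h01

end
end

section
/- Conversely, every even self-dual lattice 𝓛 ⊂ R^{n,n} (with respect to the signature (n,n) form) satisfying (L;L) ⊆ 𝓛 ⊆ (L*;L*) defines a modular invariant Z by Z_{[u],[v]} = 1 if (u;v) ∈ 𝓛 and 0 otherwise: Z commutes with S and T, has nonnegative integer entries, and Z_{[0],[0]} = 1. -/
/-!
STATEMENT 0: Every entry of a modular invariant for the lattice (torus) chiral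
data is either 0 or 1.
-/

open scoped BigOperators
open Complex

noncomputable section

open scoped Classical in
/-- The T-matrix of the lattice chiral data. -/
def Tmat {n : ℕ} (L : AddSubgroup (Fin n → ℝ)) :
    Matrix (latQuot L) (latQuot L) ℂ := fun x y =>
  if x = y then
    Complex.exp (Real.pi * Complex.I *
        (dotR ((Quotient.out x : dualLattice L) : Fin n → ℝ)
              ((Quotient.out x : dualLattice L) : Fin n → ℝ))
      - Real.pi * Complex.I * n / 12)
  else 0

/-- The hyperbolic (signature `(n,n)`) form on `ℝ^{n,n}`. -/
def hform {n : ℕ} (p q : (Fin n → ℝ) × (Fin n → ℝ)) : ℝ :=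
  dotR p.1 q.1 - dotR p.2 q.2


open scoped Classical

namespace ModInvAux

variable {Q : Type*} [AddCommGroup Q] [Fintype Q]

/-- Packaged data: a symmetric bimultiplicative pairing `ph` with values in `ℂ`
and a "self-dual" relation `Hp`. -/
structure PairData (Q : Type*) [AddCommGroup Q] [Fintype Q] where
  ph : Q → Q → ℂ
  Hp : Q → Q → Prop
  h1 : ∀ a b c, ph (a + b) c = ph a c * ph b c
  h2 : ∀ a b, ph a b = ph b a
  h3 : ∀ a b, ph a b ≠ 0
  sd1 : ∀ a b c d, Hp a b → Hp c d → ph a c = ph b d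
  sd2 : ∀ a b, (∀ c d, Hp c d → ph a c = ph b d) → Hp a b

/-- Shift-trick vanishing lemma. -/
lemma vanish {G : Type*} [AddCommGroup G] [Fintype G] (f : G → ℂ) (p : G → Prop)
    (k : G) (hadd : ∀ a b, f (a + b) = f a * f b)
    (hp : ∀ z, p z ↔ p (z + k)) (hk : f k ≠ 1) :
    ∑ z, (if p z then f z else 0) = 0 := by
  have key : ∑ z, (if p z then f z else 0)
      = (∑ z, (if p z then f z else 0)) * f k := by
    calc ∑ z, (if p z then f z else 0)
        = ∑ z, (if p (z + k) then f (z + k) else 0) := by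
          exact (Fintype.sum_equiv (Equiv.addRight k)
            (fun z => if p (z + k) then f (z + k) else 0)
            (fun z => if p z then f z else 0) (fun z => rfl)).symm
      _ = ∑ z, (if p z then f z else 0) * f k := by
          refine Finset.sum_congr rfl fun z _ => ?_
          by_cases h : p z
          · rw [if_pos h, if_pos ((hp z).mp h), hadd]
          · rw [if_neg h, if_neg (fun h' => h ((hp z).mpr h')), zero_mul]
      _ = (∑ z, (if p z then f z else 0)) * f k := by rw [Finset.sum_mul]
  by_contra hS
  exact hk (mul_left_cancel₀ hS (by rw [← key, mul_one]))


namespace PairData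

variable (D : PairData Q)

lemma ph_zero_left (c : Q) : D.ph 0 c = 1 := by
  have h := D.h1 0 0 c
  rw [add_zero] at h
  exact (mul_left_cancel₀ (D.h3 0 c) (by rw [← h, mul_one])).symm

lemma ph_zero_right (c : Q) : D.ph c 0 = 1 := by
  rw [D.h2]; exact D.ph_zero_left c

lemma ph_add_right (a b c : Q) : D.ph c (a + b) = D.ph c a * D.ph c b := by
  rw [D.h2, D.h1, D.h2 a c, D.h2 b c]

lemma ph_neg_left (a c : Q) : D.ph (-a) c = (D.ph a c)⁻¹ := by
  have h := D.h1 a (-a) c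
  rw [add_neg_cancel, D.ph_zero_left] at h
  field_simp [D.h3 a c] at h ⊢
  rw [mul_comm] at h
  rw [mul_comm]; exact h.symm

lemma Hzero : D.Hp 0 0 := by
  refine D.sd2 0 0 fun c d _ => ?_
  rw [D.ph_zero_left, D.ph_zero_left]

lemma Hadd {a b c d : Q} (h1 : D.Hp a b) (h2 : D.Hp c d) : D.Hp (a + c) (b + d) := by
  refine D.sd2 _ _ fun e f hef => ?_
  rw [D.h1, D.h1, D.sd1 a b e f h1 hef, D.sd1 c d e f h2 hef]

lemma Hneg {a b : Q} (h : D.Hp a b) : D.Hp (-a) (-b) := by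
  refine D.sd2 _ _ fun e f hef => ?_
  rw [D.ph_neg_left, D.ph_neg_left, D.sd1 a b e f h hef]

lemma Hsub {a b c d : Q} (h1 : D.Hp a b) (h2 : D.Hp c d) : D.Hp (a - c) (b - d) := by
  rw [sub_eq_add_neg, sub_eq_add_neg]
  exact D.Hadd h1 (D.Hneg h2)

/-- The swapped data. -/
def swap : PairData Q where
  ph := D.ph
  Hp := fun a b => D.Hp b a
  h1 := D.h1
  h2 := D.h2
  h3 := D.h3
  sd1 := fun a b c d hab hcd => (D.sd1 b a d c hab hcd).symm
  sd2 := fun a b h => D.sd2 b a fun c d hcd => (h d c hcd).symm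

/-- Full group character sum. -/
lemma fullsum (c : Q) :
    ∑ w, D.ph w c = if (∀ w, D.ph w c = 1) then (Fintype.card Q : ℂ) else 0 := by
  split_ifs with h
  · simp [h, Finset.card_univ]
  · push_neg at h
    obtain ⟨k, hk⟩ := h
    have hv := vanish (fun w => D.ph w c) (fun _ => True) k
      (fun a b => D.h1 a b c) (fun z => by simp) hk
    simpa using hv

/-- Indicator lemma: the character sum over the self-dual subgroup. -/
lemma indicator (a b : Q) :
    ∑ p : Q × Q, (if D.Hp p.1 p.2 then D.ph a p.1 * (D.ph b p.2)⁻¹ else 0)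
      = if D.Hp a b then ((Finset.univ.filter fun p : Q × Q => D.Hp p.1 p.2).card : ℂ) else 0 := by
  by_cases hab : D.Hp a b
  · rw [if_pos hab]
    rw [← Finset.sum_filter]
    rw [show ((Finset.univ.filter fun p : Q × Q => D.Hp p.1 p.2).card : ℂ)
        = ∑ _p ∈ Finset.univ.filter fun p : Q × Q => D.Hp p.1 p.2, (1 : ℂ) by simp]
    refine Finset.sum_congr rfl fun p hp => ?_
    rw [Finset.mem_filter] at hp
    rw [D.sd1 a b p.1 p.2 hab hp.2]
    exact mul_inv_cancel₀ (D.h3 b p.2)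
  · rw [if_neg hab]
    have h2 := mt (D.sd2 a b) hab
    push_neg at h2
    obtain ⟨c₀, d₀, hcd, hne⟩ := h2
    refine vanish (fun p : Q × Q => D.ph a p.1 * (D.ph b p.2)⁻¹)
      (fun p : Q × Q => D.Hp p.1 p.2) (c₀, d₀) ?_ ?_ ?_
    · intro p q
      simp only [Prod.fst_add, Prod.snd_add, D.ph_add_right, mul_inv]
      ring
    · intro z
      constructor
      · intro h; exact D.Hadd h hcd
      · intro h
        have := D.Hsub h hcd
        simpa using this
    · simp only
      intro h
      exact hne ((mul_inv_eq_one₀ (D.h3 b d₀)).mp h)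


lemma HR (c : Q) (hc : ∀ w, D.ph w c = 1) : D.Hp c 0 := by
  refine D.sd2 c 0 fun e f hef => ?_
  rw [D.h2, hc e, D.ph_zero_left]

/-- The counting identity. -/
lemma cnt (y : Q) :
    ((Finset.univ.filter fun w => D.Hp w y).card : ℂ)
      * ((Finset.univ.filter fun p : Q × Q => D.Hp p.1 p.2).card : ℂ)
    = (Fintype.card Q : ℂ)
      * ((Finset.univ.filter fun c => ∀ w, D.ph w c = 1).card : ℂ)
      * ∑ d, (if D.Hp 0 d then (D.ph y d)⁻¹ else 0) := by
  have e1 : ∑ w, ∑ p : Q × Q, (if D.Hp p.1 p.2 then D.ph w p.1 * (D.ph y p.2)⁻¹ else 0)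
      = ((Finset.univ.filter fun w => D.Hp w y).card : ℂ)
        * ((Finset.univ.filter fun p : Q × Q => D.Hp p.1 p.2).card : ℂ) := by
    rw [Finset.sum_congr rfl fun w _ => D.indicator w y]
    rw [← Finset.sum_filter, Finset.sum_const, nsmul_eq_mul]
  rw [← e1, Finset.sum_comm]
  have e2 : ∀ p : Q × Q,
      ∑ w, (if D.Hp p.1 p.2 then D.ph w p.1 * (D.ph y p.2)⁻¹ else 0)
      = if (∀ w, D.ph w p.1 = 1) ∧ D.Hp 0 p.2
          then (Fintype.card Q : ℂ) * (D.ph y p.2)⁻¹ else 0 := by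
    intro p
    by_cases h : D.Hp p.1 p.2
    · rw [Finset.sum_congr rfl fun w _ => if_pos h, ← Finset.sum_mul, D.fullsum p.1]
      by_cases hr : ∀ w, D.ph w p.1 = 1
      · rw [if_pos hr, if_pos ⟨hr, by simpa using D.Hsub h (D.HR p.1 hr)⟩]
      · rw [if_neg hr, zero_mul, if_neg (fun hc => hr hc.1)]
    · rw [Finset.sum_congr rfl fun w _ => if_neg h]
      rw [Finset.sum_const, smul_zero]
      by_cases hc : (∀ w, D.ph w p.1 = 1) ∧ D.Hp 0 p.2
      · exfalso
        exact h (by simpa using D.Hadd (D.HR p.1 hc.1) hc.2)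
      · rw [if_neg hc]
  rw [Finset.sum_congr rfl fun p _ => e2 p]
  rw [Fintype.sum_prod_type]
  have e3 : ∀ c : Q,
      ∑ d, (if (∀ w, D.ph w c = 1) ∧ D.Hp 0 d then (Fintype.card Q : ℂ) * (D.ph y d)⁻¹ else 0)
      = if (∀ w, D.ph w c = 1)
          then (Fintype.card Q : ℂ) * ∑ d, (if D.Hp 0 d then (D.ph y d)⁻¹ else 0) else 0 := by
    intro c
    by_cases hr : ∀ w, D.ph w c = 1
    · rw [if_pos hr, Finset.mul_sum]
      refine Finset.sum_congr rfl fun d _ => ?_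
      by_cases hd : D.Hp 0 d
      · rw [if_pos ⟨hr, hd⟩, if_pos hd]
      · rw [if_neg (fun h => hd h.2), if_neg hd, mul_zero]
    · rw [if_neg hr]
      exact Finset.sum_eq_zero fun d _ => if_neg (fun h => hr h.1)
  rw [Finset.sum_congr rfl fun c _ => e3 c, ← Finset.sum_filter, Finset.sum_const,
    nsmul_eq_mul]
  ring


/-- If the second slot `y` is not in the image, the twisted sum vanishes. -/
lemma onesided (x y : Q) (hB : ¬ ∃ w, D.Hp w y) :
    ∑ z, (if D.Hp x z then D.ph z y else 0) = 0 := by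
  have hK : ∃ k, D.Hp 0 k ∧ D.ph k y ≠ 1 := by
    by_contra hcon
    push_neg at hcon
    have hsum : ∑ d, (if D.Hp 0 d then (D.ph y d)⁻¹ else 0)
        = ((Finset.univ.filter fun d => D.Hp 0 d).card : ℂ) := by
      rw [← Finset.sum_filter]
      rw [show ((Finset.univ.filter fun d => D.Hp 0 d).card : ℂ)
          = ∑ _d ∈ Finset.univ.filter fun d => D.Hp 0 d, (1 : ℂ) by simp]
      refine Finset.sum_congr rfl fun d hd => ?_
      rw [Finset.mem_filter] at hd
      rw [D.h2, hcon d hd.2, inv_one]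
    have hc := D.cnt y
    have hB0 : (Finset.univ.filter fun w => D.Hp w y) = ∅ := by
      refine Finset.filter_eq_empty_iff.mpr fun w _ h => hB ⟨w, h⟩
    rw [hB0, hsum] at hc
    simp only [Finset.card_empty, Nat.cast_zero, zero_mul] at hc
    have hQ : (Fintype.card Q : ℂ) ≠ 0 := by
      exact_mod_cast Fintype.card_ne_zero (α := Q)
    have hR : ((Finset.univ.filter fun c => ∀ w, D.ph w c = 1).card : ℂ) ≠ 0 := by
      rw [Nat.cast_ne_zero, ← Nat.pos_iff_ne_zero]
      exact Finset.card_pos.mpr ⟨0, by simp [D.ph_zero_right]⟩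
    have hK2 : ((Finset.univ.filter fun d => D.Hp 0 d).card : ℂ) ≠ 0 := by
      rw [Nat.cast_ne_zero, ← Nat.pos_iff_ne_zero]
      exact Finset.card_pos.mpr ⟨0, by simp [D.Hzero]⟩
    exact (mul_ne_zero (mul_ne_zero hQ hR) hK2) hc.symm
  obtain ⟨k, hk0, hk1⟩ := hK
  refine vanish (fun z => D.ph z y) (fun z => D.Hp x z) k (fun a b => D.h1 a b y)
    (fun z => ⟨fun h => by simpa using D.Hadd h hk0,
               fun h => by simpa using D.Hsub h hk0⟩) hk1


lemma aux_cancel {k1 k2 h q r : ℕ} (h1 : (k1 : ℂ) * h = q * r * k2)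
    (h2 : (k2 : ℂ) * h = q * r * k1) (hh : h ≠ 0) : k1 = k2 := by
  have key : ((k1 : ℂ) - k2) * ((h : ℂ) + q * r) = 0 := by linear_combination h1 - h2
  rcases mul_eq_zero.mp key with h3 | h3
  · have := sub_eq_zero.mp h3
    exact_mod_cast this
  · exfalso
    have hc : ((h + q * r : ℕ) : ℂ) = 0 := by push_cast; linear_combination h3
    have := Nat.cast_eq_zero.mp hc
    omega

lemma card_eq {x y z₀ w₀ : Q} (hz₀ : D.Hp x z₀) (hw₀ : D.Hp w₀ y) :
    (Finset.univ.filter fun z => D.Hp x z).card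
      = (Finset.univ.filter fun w => D.Hp w y).card := by
  have hAK2 : (Finset.univ.filter fun z => D.Hp x z).card
      = (Finset.univ.filter fun d => D.Hp 0 d).card := by
    refine Finset.card_bij' (fun z _ => z - z₀) (fun d _ => z₀ + d) ?_ ?_ ?_ ?_
    · intro z hz
      rw [Finset.mem_filter] at hz ⊢
      exact ⟨Finset.mem_univ _, by simpa using D.Hsub hz.2 hz₀⟩
    · intro d hd
      rw [Finset.mem_filter] at hd ⊢
      exact ⟨Finset.mem_univ _, by simpa using D.Hadd hz₀ hd.2⟩
    · intro z _; abel
    · intro d _; abel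
  have hBK1 : (Finset.univ.filter fun w => D.Hp w y).card
      = (Finset.univ.filter fun d => D.Hp d 0).card := by
    refine Finset.card_bij' (fun w _ => w - w₀) (fun d _ => d + w₀) ?_ ?_ ?_ ?_
    · intro w hw
      rw [Finset.mem_filter] at hw ⊢
      exact ⟨Finset.mem_univ _, by simpa using D.Hsub hw.2 hw₀⟩
    · intro d hd
      rw [Finset.mem_filter] at hd ⊢
      exact ⟨Finset.mem_univ _, by simpa using D.Hadd hd.2 hw₀⟩
    · intro w _; abel
    · intro d _; abel
  have ey := D.cnt y
  have hsumy : ∑ d, (if D.Hp 0 d then (D.ph y d)⁻¹ else 0)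
      = ((Finset.univ.filter fun d => D.Hp 0 d).card : ℂ) := by
    rw [← Finset.sum_filter]
    rw [show ((Finset.univ.filter fun d => D.Hp 0 d).card : ℂ)
        = ∑ _d ∈ Finset.univ.filter fun d => D.Hp 0 d, (1 : ℂ) by simp]
    refine Finset.sum_congr rfl fun d hd => ?_
    rw [Finset.mem_filter] at hd
    have h := D.sd1 0 d w₀ y hd.2 hw₀
    rw [D.ph_zero_left] at h
    rw [D.h2, ← h, inv_one]
  rw [hsumy] at ey
  have ex := D.swap.cnt x
  have hswapH : (Finset.univ.filter fun p : Q × Q => D.swap.Hp p.1 p.2).card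
      = (Finset.univ.filter fun p : Q × Q => D.Hp p.1 p.2).card := by
    refine Finset.card_bij' (fun p _ => p.swap) (fun p _ => p.swap) ?_ ?_ ?_ ?_
    · intro p hp
      rw [Finset.mem_filter] at hp ⊢
      exact ⟨Finset.mem_univ _, hp.2⟩
    · intro p hp
      rw [Finset.mem_filter] at hp ⊢
      exact ⟨Finset.mem_univ _, hp.2⟩
    · intro p _; exact Prod.swap_swap p
    · intro p _; exact Prod.swap_swap p
  have hsumx : ∑ d, (if D.swap.Hp 0 d then (D.swap.ph x d)⁻¹ else 0)
      = ((Finset.univ.filter fun d => D.Hp d 0).card : ℂ) := by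
    rw [← Finset.sum_filter]
    rw [show ((Finset.univ.filter fun d => D.Hp d 0).card : ℂ)
        = ∑ _d ∈ Finset.univ.filter fun d : Q => D.swap.Hp 0 d, (1 : ℂ) by simp; rfl]
    refine Finset.sum_congr rfl fun d hd => ?_
    rw [Finset.mem_filter] at hd
    have hd0 : D.Hp d 0 := hd.2
    have h := D.sd1 d 0 x z₀ hd0 hz₀
    rw [D.ph_zero_left] at h
    show (D.ph x d)⁻¹ = 1
    rw [D.h2, h, inv_one]
  rw [hsumx, hswapH] at ex
  have hA' : (Finset.univ.filter fun w : Q => D.swap.Hp w x)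
      = (Finset.univ.filter fun z => D.Hp x z) := rfl
  have hR' : (Finset.univ.filter fun c : Q => ∀ w, D.swap.ph w c = 1)
      = (Finset.univ.filter fun c : Q => ∀ w, D.ph w c = 1) := rfl
  rw [hA', hR', hAK2] at ex
  rw [hBK1] at ey
  have hH : (Finset.univ.filter fun p : Q × Q => D.Hp p.1 p.2).card ≠ 0 := by
    rw [← Nat.pos_iff_ne_zero]
    exact Finset.card_pos.mpr ⟨(x, z₀), by simp [hz₀]⟩
  have hfin := aux_cancel ey ex hH
  rw [hAK2, hBK1, hfin]

/-- Main abstract commutation identity. -/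
theorem main (x y : Q) :
    ∑ z, (if D.Hp x z then D.ph z y else 0)
      = ∑ w, (if D.Hp w y then D.ph x w else 0) := by
  by_cases hB : ∃ w, D.Hp w y
  · by_cases hA : ∃ z, D.Hp x z
    · obtain ⟨z₀, hz₀⟩ := hA
      obtain ⟨w₀, hw₀⟩ := hB
      have hterm1 : ∀ z, D.Hp x z → D.ph z y = D.ph z₀ y := by
        intro z hz
        have h0 : D.Hp 0 (z - z₀) := by simpa using D.Hsub hz hz₀
        have h1' : D.ph (z - z₀) y = 1 := by
          have h := D.sd1 0 (z - z₀) w₀ y h0 hw₀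
          rw [D.ph_zero_left] at h
          exact h.symm
        have hz' : z₀ + (z - z₀) = z := by abel
        calc D.ph z y = D.ph (z₀ + (z - z₀)) y := by rw [hz']
          _ = D.ph z₀ y * D.ph (z - z₀) y := D.h1 _ _ _
          _ = D.ph z₀ y := by rw [h1', mul_one]
      have hterm2 : ∀ w, D.Hp w y → D.ph x w = D.ph x w₀ := by
        intro w hw
        have h0 : D.Hp (w - w₀) 0 := by simpa using D.Hsub hw hw₀
        have h1' : D.ph x (w - w₀) = 1 := by
          have h := D.sd1 (w - w₀) 0 x z₀ h0 hz₀
          rw [D.ph_zero_left] at h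
          rw [D.h2]
          rw [h]
        have hw' : w₀ + (w - w₀) = w := by abel
        calc D.ph x w = D.ph x (w₀ + (w - w₀)) := by rw [hw']
          _ = D.ph x w₀ * D.ph x (w - w₀) := D.ph_add_right _ _ _
          _ = D.ph x w₀ := by rw [h1', mul_one]
      have hphase : D.ph x w₀ = D.ph z₀ y := D.sd1 x z₀ w₀ y hz₀ hw₀
      have hL : ∑ z, (if D.Hp x z then D.ph z y else 0)
          = ((Finset.univ.filter fun z => D.Hp x z).card : ℂ) * D.ph z₀ y := by
        rw [← Finset.sum_filter]
        rw [Finset.sum_congr rfl fun z hz =>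
          hterm1 z (Finset.mem_filter.mp hz).2]
        rw [Finset.sum_const, nsmul_eq_mul]
      have hRi : ∑ w, (if D.Hp w y then D.ph x w else 0)
          = ((Finset.univ.filter fun w => D.Hp w y).card : ℂ) * D.ph x w₀ := by
        rw [← Finset.sum_filter]
        rw [Finset.sum_congr rfl fun w hw =>
          hterm2 w (Finset.mem_filter.mp hw).2]
        rw [Finset.sum_const, nsmul_eq_mul]
      have hcard : (Finset.univ.filter fun z => D.Hp x z).card
          = (Finset.univ.filter fun w => D.Hp w y).card := D.card_eq hz₀ hw₀
      rw [hL, hRi, hphase, hcard]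
    · have hLHS : ∑ z, (if D.Hp x z then D.ph z y else 0) = 0 :=
        Finset.sum_eq_zero fun z _ => if_neg fun h => hA ⟨z, h⟩
      have h := D.swap.onesided y x (fun ⟨w, h⟩ => hA ⟨w, h⟩)
      have hRHS : ∑ w, (if D.Hp w y then D.ph x w else 0)
          = ∑ w, (if D.Hp w y then D.ph w x else 0) :=
        Finset.sum_congr rfl fun w _ => by rw [D.h2 x w]
      rw [hLHS, hRHS]
      exact h.symm
  · have hRHS : ∑ w, (if D.Hp w y then D.ph x w else 0) = 0 :=
      Finset.sum_eq_zero fun w _ => if_neg fun h => hB ⟨w, h⟩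
    rw [hRHS]
    exact D.onesided x y hB

end PairData


lemma dotR_symm {n : ℕ} (u v : Fin n → ℝ) : dotR u v = dotR v u := by
  simp [dotR, mul_comm]

lemma dotR_add_right {n : ℕ} (u v w : Fin n → ℝ) :
    dotR u (v + w) = dotR u v + dotR u w := by
  simp [dotR, mul_add, Finset.sum_add_distrib]

lemma dotR_neg_right {n : ℕ} (u v : Fin n → ℝ) : dotR u (-v) = -dotR u v := by
  simp [dotR]

lemma dotR_sub_right {n : ℕ} (u v w : Fin n → ℝ) :
    dotR u (v - w) = dotR u v - dotR u w := by
  rw [sub_eq_add_neg, dotR_add_right, dotR_neg_right, sub_eq_add_neg]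

lemma dotR_sub_left {n : ℕ} (u v w : Fin n → ℝ) :
    dotR (u - v) w = dotR u w - dotR v w := by
  rw [sub_eq_add_neg, dotR_add_left, dotR_neg_left, sub_eq_add_neg]

lemma exp_two_pi_int (m : ℤ) : Complex.exp (2 * Real.pi * Complex.I * m) = 1 := by
  rw [show (2 * (Real.pi : ℂ) * Complex.I * m) = m * (2 * Real.pi * Complex.I) by ring]
  exact Complex.exp_int_mul_two_pi_mul_I m

lemma expEq_of_int {t s : ℝ} (m : ℤ) (h : t = s + m) :
    Complex.exp (2 * Real.pi * Complex.I * t) = Complex.exp (2 * Real.pi * Complex.I * s) := by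
  rw [h]
  push_cast
  rw [mul_add, Complex.exp_add, exp_two_pi_int, mul_one]

lemma int_of_expEq {t s : ℝ}
    (h : Complex.exp (2 * Real.pi * Complex.I * t) = Complex.exp (2 * Real.pi * Complex.I * s)) :
    ∃ m : ℤ, t - s = m := by
  rw [Complex.exp_eq_exp_iff_exists_int] at h
  obtain ⟨m, hm⟩ := h
  refine ⟨m, ?_⟩
  have h2pi : (2 * (Real.pi : ℂ) * Complex.I) ≠ 0 := by
    simp [Real.pi_ne_zero, Complex.I_ne_zero]
  have h2 : (2 * (Real.pi : ℂ) * Complex.I) * ((t : ℂ)) =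
      (2 * (Real.pi : ℂ) * Complex.I) * ((s : ℂ) + m) := by
    rw [show (2 * (Real.pi : ℂ) * Complex.I) * ((s : ℂ) + m)
        = 2 * (Real.pi : ℂ) * Complex.I * s + m * (2 * Real.pi * Complex.I) by ring]
    exact hm
  have h3 := mul_left_cancel₀ h2pi h2
  have h4 : (t : ℂ) - s = (m : ℂ) := by rw [h3]; ring
  exact_mod_cast h4

section Lattice

variable {n : ℕ} (L : AddSubgroup (Fin n → ℝ)) [Fintype (latQuot L)]

/-- The canonical representative of a class. -/
def ov (x : latQuot L) : Fin n → ℝ := ((Quotient.out x : dualLattice L) : Fin n → ℝ)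

lemma ov_mem (x : latQuot L) : ov L x ∈ dualLattice L := (Quotient.out x).2

lemma diff_mem (a : dualLattice L) (x : latQuot L)
    (h : QuotientAddGroup.mk a = x) : ov L x - (a : Fin n → ℝ) ∈ L := by
  have h1 : (QuotientAddGroup.mk (Quotient.out x) : latQuot L) = QuotientAddGroup.mk a := by
    rw [QuotientAddGroup.out_eq', h]
  have h2 := QuotientAddGroup.eq.mp h1
  have h3 := AddSubgroup.mem_addSubgroupOf.mp h2
  have h4 : (-(ov L x) + (a : Fin n → ℝ)) ∈ L := h3
  have h5 := L.neg_mem h4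
  have h6 : -(-(ov L x) + (a : Fin n → ℝ)) = ov L x - a := by abel
  rwa [h6] at h5

/-- The phase pairing on `L*/L`. -/
def phL (x y : latQuot L) : ℂ :=
  Complex.exp (2 * Real.pi * Complex.I * (dotR (ov L x) (ov L y) : ℝ))

lemma phL_congr (a : dualLattice L) (x y : latQuot L) (h : QuotientAddGroup.mk a = x) :
    phL L x y = Complex.exp (2 * Real.pi * Complex.I * (dotR (a : Fin n → ℝ) (ov L y) : ℝ)) := by
  obtain ⟨m, hm⟩ := (ov_mem L y) _ (diff_mem L a x h)
  refine expEq_of_int m ?_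
  rw [dotR_sub_right] at hm
  have h1 := dotR_symm (ov L y) (ov L x)
  have h2 := dotR_symm (ov L y) (a : Fin n → ℝ)
  linarith

lemma phL_symm (x y : latQuot L) : phL L x y = phL L y x := by
  unfold phL
  rw [dotR_symm]

lemma phL_add (a b c : latQuot L) : phL L (a + b) c = phL L a c * phL L b c := by
  have hmk : (QuotientAddGroup.mk (Quotient.out a + Quotient.out b) : latQuot L) = a + b := by
    have : (QuotientAddGroup.mk (Quotient.out a + Quotient.out b) : latQuot L)
        = QuotientAddGroup.mk (Quotient.out a) + QuotientAddGroup.mk (Quotient.out b) := rfl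
    rw [this, QuotientAddGroup.out_eq', QuotientAddGroup.out_eq']
  rw [phL_congr L _ _ c hmk]
  have hval : ((Quotient.out a + Quotient.out b : dualLattice L) : Fin n → ℝ)
      = ov L a + ov L b := rfl
  rw [hval, dotR_add_left]
  unfold phL
  push_cast
  rw [mul_add, Complex.exp_add]

end Lattice

section LatticeData

variable {n : ℕ} (L : AddSubgroup (Fin n → ℝ)) [Fintype (latQuot L)]
variable (𝓛 : AddSubgroup ((Fin n → ℝ) × (Fin n → ℝ)))

lemma Hp_congr (hLsub : ∀ u ∈ L, ∀ v ∈ L, (u, v) ∈ 𝓛)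
    (a b : dualLattice L) (x y : latQuot L)
    (hx : QuotientAddGroup.mk a = x) (hy : QuotientAddGroup.mk b = y) :
    ((a : Fin n → ℝ), (b : Fin n → ℝ)) ∈ 𝓛 ↔ (ov L x, ov L y) ∈ 𝓛 := by
  have d1 := diff_mem L a x hx
  have d2 := diff_mem L b y hy
  have hd : ((ov L x - a, ov L y - b) : (Fin n → ℝ) × (Fin n → ℝ)) ∈ 𝓛 :=
    hLsub _ d1 _ d2
  constructor
  · intro h
    have hmem := 𝓛.add_mem h hd
    have he : ((a : Fin n → ℝ), (b : Fin n → ℝ)) + (ov L x - a, ov L y - b)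
        = (ov L x, ov L y) := by
      rw [Prod.mk_add_mk]
      simp only [Prod.mk.injEq]
      constructor <;> abel
    rwa [he] at hmem
  · intro h
    have hmem := 𝓛.sub_mem h hd
    have he : ((ov L x, ov L y) : (Fin n → ℝ) × (Fin n → ℝ)) - (ov L x - a, ov L y - b)
        = ((a : Fin n → ℝ), (b : Fin n → ℝ)) := by
      rw [Prod.mk_sub_mk]
      simp only [Prod.mk.injEq]
      constructor <;> abel
    rwa [he] at hmem

/-- The `PairData` attached to the self-dual lattice `𝓛`. -/
def latD (hLsub : ∀ u ∈ L, ∀ v ∈ L, (u, v) ∈ 𝓛)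
    (hLsup : ∀ p ∈ 𝓛, p.1 ∈ dualLattice L ∧ p.2 ∈ dualLattice L)
    (hselfdual : (𝓛 : Set ((Fin n → ℝ) × (Fin n → ℝ)))
        = {q | ∀ p ∈ 𝓛, ∃ m : ℤ, hform q p = m}) :
    PairData (latQuot L) where
  ph := phL L
  Hp := fun x y => (ov L x, ov L y) ∈ 𝓛
  h1 := phL_add L
  h2 := phL_symm L
  h3 := fun _ _ => Complex.exp_ne_zero _
  sd1 := by
    intro a b c d hab hcd
    have hmem : (ov L a, ov L b) ∈
        {q : (Fin n → ℝ) × (Fin n → ℝ) | ∀ p ∈ 𝓛, ∃ m : ℤ, hform q p = m} := by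
      rw [← hselfdual]; exact hab
    obtain ⟨m, hm⟩ := hmem _ hcd
    unfold hform at hm
    dsimp only at hm
    unfold phL
    exact expEq_of_int m (by linarith)
  sd2 := by
    intro a b h
    have hgoal : (ov L a, ov L b) ∈ (𝓛 : Set ((Fin n → ℝ) × (Fin n → ℝ))) := by
      rw [hselfdual]
      intro p hp
      obtain ⟨hp1, hp2⟩ := hLsup p hp
      set c : latQuot L := QuotientAddGroup.mk (⟨p.1, hp1⟩ : dualLattice L) with hc
      set d : latQuot L := QuotientAddGroup.mk (⟨p.2, hp2⟩ : dualLattice L) with hd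
      have hcd : (ov L c, ov L d) ∈ 𝓛 := by
        refine (Hp_congr L 𝓛 hLsub ⟨p.1, hp1⟩ ⟨p.2, hp2⟩ c d hc.symm hd.symm).mp ?_
        exact hp
      have hexp := h c d hcd
      unfold phL at hexp
      obtain ⟨m, hm⟩ := int_of_expEq hexp
      obtain ⟨m₁, hm₁⟩ := (ov_mem L a) _ (diff_mem L ⟨p.1, hp1⟩ c hc.symm)
      obtain ⟨m₂, hm₂⟩ := (ov_mem L b) _ (diff_mem L ⟨p.2, hp2⟩ d hd.symm)
      rw [dotR_sub_right] at hm₁ hm₂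
      refine ⟨m - m₁ + m₂, ?_⟩
      unfold hform
      dsimp only
      push_cast
      linarith [hm, hm₁, hm₂]
    exact hgoal

end LatticeData


end ModInvAux

open scoped Classical in
/-- every even self-dual lattice `𝓛` with
`(L;L) ⊆ 𝓛 ⊆ (L*;L*)` defines a modular invariant:
`Z_{[u],[v]} = 1` iff `(u;v) ∈ 𝓛`, and `0` otherwise. -/
theorem stmt_3 {n : ℕ} (L : AddSubgroup (Fin n → ℝ))
    (hEven : IsEvenLattice L) (hLL : L ≤ dualLattice L)
    (hspan : Submodule.span ℝ (L : Set (Fin n → ℝ)) = ⊤)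
    [Fintype (latQuot L)]
    (𝓛 : AddSubgroup ((Fin n → ℝ) × (Fin n → ℝ)))
    (hLsub : ∀ u ∈ L, ∀ v ∈ L, (u, v) ∈ 𝓛)
    (hLsup : ∀ p ∈ 𝓛, p.1 ∈ dualLattice L ∧ p.2 ∈ dualLattice L)
    (h𝓛even : ∀ p ∈ 𝓛, ∃ m : ℤ, hform p p = 2 * m)
    (hselfdual : (𝓛 : Set ((Fin n → ℝ) × (Fin n → ℝ)))
        = {q | ∀ p ∈ 𝓛, ∃ m : ℤ, hform q p = m}) :
    (Matrix.of fun x y : latQuot L =>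
        (if (((Quotient.out x : dualLattice L) : Fin n → ℝ),
             ((Quotient.out y : dualLattice L) : Fin n → ℝ)) ∈ 𝓛
         then (1 : ℂ) else 0)) * Smat L
      = Smat L * (Matrix.of fun x y : latQuot L =>
        (if (((Quotient.out x : dualLattice L) : Fin n → ℝ),
             ((Quotient.out y : dualLattice L) : Fin n → ℝ)) ∈ 𝓛
         then (1 : ℂ) else 0)) ∧
    (Matrix.of fun x y : latQuot L =>
        (if (((Quotient.out x : dualLattice L) : Fin n → ℝ),
             ((Quotient.out y : dualLattice L) : Fin n → ℝ)) ∈ 𝓛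
         then (1 : ℂ) else 0)) * Tmat L
      = Tmat L * (Matrix.of fun x y : latQuot L =>
        (if (((Quotient.out x : dualLattice L) : Fin n → ℝ),
             ((Quotient.out y : dualLattice L) : Fin n → ℝ)) ∈ 𝓛
         then (1 : ℂ) else 0)) ∧
    (if (((Quotient.out (0 : latQuot L) : dualLattice L) : Fin n → ℝ),
         ((Quotient.out (0 : latQuot L) : dualLattice L) : Fin n → ℝ)) ∈ 𝓛
     then (1 : ℕ) else 0) = 1 := by
  classical
  have main' : ∀ x y : latQuot L,
      ∑ z, (if (((Quotient.out x : dualLattice L) : Fin n → ℝ),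
                ((Quotient.out z : dualLattice L) : Fin n → ℝ)) ∈ 𝓛
            then Complex.exp (2 * Real.pi * Complex.I *
              (dotR ((Quotient.out z : dualLattice L) : Fin n → ℝ)
                    ((Quotient.out y : dualLattice L) : Fin n → ℝ))) else 0)
      = ∑ w, (if (((Quotient.out w : dualLattice L) : Fin n → ℝ),
                ((Quotient.out y : dualLattice L) : Fin n → ℝ)) ∈ 𝓛
            then Complex.exp (2 * Real.pi * Complex.I *
              (dotR ((Quotient.out x : dualLattice L) : Fin n → ℝ)
                    ((Quotient.out w : dualLattice L) : Fin n → ℝ))) else 0) :=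
    fun x y => ModInvAux.PairData.main (ModInvAux.latD L 𝓛 hLsub hLsup hselfdual) x y
  refine ⟨?_, ?_, ?_⟩
  · -- commutation with S
    ext x y
    rw [Matrix.mul_apply, Matrix.mul_apply]
    have cS : ∀ z w : latQuot L, Smat L z w
        = (((Real.sqrt (Fintype.card (latQuot L)))⁻¹ : ℝ) : ℂ) *
          Complex.exp (2 * Real.pi * Complex.I *
            (dotR ((Quotient.out z : dualLattice L) : Fin n → ℝ)
                  ((Quotient.out w : dualLattice L) : Fin n → ℝ))) := fun _ _ => rfl
    calc ∑ z, (Matrix.of fun x y : latQuot L =>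
            (if (((Quotient.out x : dualLattice L) : Fin n → ℝ),
                 ((Quotient.out y : dualLattice L) : Fin n → ℝ)) ∈ 𝓛
             then (1 : ℂ) else 0)) x z * Smat L z y
        = (((Real.sqrt (Fintype.card (latQuot L)))⁻¹ : ℝ) : ℂ) *
            ∑ z, (if (((Quotient.out x : dualLattice L) : Fin n → ℝ),
                ((Quotient.out z : dualLattice L) : Fin n → ℝ)) ∈ 𝓛
            then Complex.exp (2 * Real.pi * Complex.I *
              (dotR ((Quotient.out z : dualLattice L) : Fin n → ℝ)
                    ((Quotient.out y : dualLattice L) : Fin n → ℝ))) else 0) := by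
          rw [Finset.mul_sum]
          refine Finset.sum_congr rfl fun z _ => ?_
          rw [cS z y, Matrix.of_apply]
          split_ifs with h <;> ring
      _ = (((Real.sqrt (Fintype.card (latQuot L)))⁻¹ : ℝ) : ℂ) *
            ∑ w, (if (((Quotient.out w : dualLattice L) : Fin n → ℝ),
                ((Quotient.out y : dualLattice L) : Fin n → ℝ)) ∈ 𝓛
            then Complex.exp (2 * Real.pi * Complex.I *
              (dotR ((Quotient.out x : dualLattice L) : Fin n → ℝ)
                    ((Quotient.out w : dualLattice L) : Fin n → ℝ))) else 0) := by
          rw [main' x y]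
      _ = ∑ w, Smat L x w * (Matrix.of fun x y : latQuot L =>
            (if (((Quotient.out x : dualLattice L) : Fin n → ℝ),
                 ((Quotient.out y : dualLattice L) : Fin n → ℝ)) ∈ 𝓛
             then (1 : ℂ) else 0)) w y := by
          rw [Finset.mul_sum]
          refine Finset.sum_congr rfl fun w _ => ?_
          rw [cS x w, Matrix.of_apply]
          split_ifs with h <;> ring
  · -- commutation with T
    ext x y
    rw [Matrix.mul_apply, Matrix.mul_apply]
    have hZT : ∑ z, (Matrix.of fun x y : latQuot L =>
          (if (((Quotient.out x : dualLattice L) : Fin n → ℝ),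
               ((Quotient.out y : dualLattice L) : Fin n → ℝ)) ∈ 𝓛
           then (1 : ℂ) else 0)) x z * Tmat L z y
        = (if (((Quotient.out x : dualLattice L) : Fin n → ℝ),
               ((Quotient.out y : dualLattice L) : Fin n → ℝ)) ∈ 𝓛
           then (1 : ℂ) else 0) *
          Complex.exp (Real.pi * Complex.I *
              (dotR ((Quotient.out y : dualLattice L) : Fin n → ℝ)
                    ((Quotient.out y : dualLattice L) : Fin n → ℝ))
            - Real.pi * Complex.I * n / 12) := by
      have hz : ∀ z, (Matrix.of fun x y : latQuot L =>
          (if (((Quotient.out x : dualLattice L) : Fin n → ℝ),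
               ((Quotient.out y : dualLattice L) : Fin n → ℝ)) ∈ 𝓛
           then (1 : ℂ) else 0)) x z * Tmat L z y
          = if z = y then (if (((Quotient.out x : dualLattice L) : Fin n → ℝ),
               ((Quotient.out z : dualLattice L) : Fin n → ℝ)) ∈ 𝓛
           then (1 : ℂ) else 0) *
              Complex.exp (Real.pi * Complex.I *
                  (dotR ((Quotient.out z : dualLattice L) : Fin n → ℝ)
                        ((Quotient.out z : dualLattice L) : Fin n → ℝ))
                - Real.pi * Complex.I * n / 12) else 0 := by
        intro z
        rw [Matrix.of_apply]
        unfold Tmat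
        by_cases h : z = y
        · rw [if_pos h, if_pos h]
        · rw [if_neg h, if_neg h, mul_zero]
      rw [Finset.sum_congr rfl fun z _ => hz z, Finset.sum_ite_eq' Finset.univ y,
        if_pos (Finset.mem_univ y)]
    have hTZ : ∑ z, Tmat L x z * (Matrix.of fun x y : latQuot L =>
          (if (((Quotient.out x : dualLattice L) : Fin n → ℝ),
               ((Quotient.out y : dualLattice L) : Fin n → ℝ)) ∈ 𝓛
           then (1 : ℂ) else 0)) z y
        = Complex.exp (Real.pi * Complex.I *
              (dotR ((Quotient.out x : dualLattice L) : Fin n → ℝ)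
                    ((Quotient.out x : dualLattice L) : Fin n → ℝ))
            - Real.pi * Complex.I * n / 12) *
          (if (((Quotient.out x : dualLattice L) : Fin n → ℝ),
               ((Quotient.out y : dualLattice L) : Fin n → ℝ)) ∈ 𝓛
           then (1 : ℂ) else 0) := by
      have hz : ∀ z, Tmat L x z * (Matrix.of fun x y : latQuot L =>
          (if (((Quotient.out x : dualLattice L) : Fin n → ℝ),
               ((Quotient.out y : dualLattice L) : Fin n → ℝ)) ∈ 𝓛
           then (1 : ℂ) else 0)) z y
          = if x = z then Complex.exp (Real.pi * Complex.I *
                  (dotR ((Quotient.out x : dualLattice L) : Fin n → ℝ)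
                        ((Quotient.out x : dualLattice L) : Fin n → ℝ))
                - Real.pi * Complex.I * n / 12) *
              (if (((Quotient.out z : dualLattice L) : Fin n → ℝ),
               ((Quotient.out y : dualLattice L) : Fin n → ℝ)) ∈ 𝓛
           then (1 : ℂ) else 0) else 0 := by
        intro z
        rw [Matrix.of_apply]
        unfold Tmat
        by_cases h : x = z
        · rw [if_pos h, if_pos h]
        · rw [if_neg h, if_neg h, zero_mul]
      rw [Finset.sum_congr rfl fun z _ => hz z, Finset.sum_ite_eq Finset.univ x,
        if_pos (Finset.mem_univ x)]
    rw [hZT, hTZ]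
    by_cases h : (((Quotient.out x : dualLattice L) : Fin n → ℝ),
               ((Quotient.out y : dualLattice L) : Fin n → ℝ)) ∈ 𝓛
    · rw [if_pos h, one_mul, mul_one]
      obtain ⟨m, hm⟩ := h𝓛even _ h
      unfold hform at hm
      dsimp only at hm
      refine Complex.exp_eq_exp_iff_exists_int.mpr ⟨-m, ?_⟩
      have hmC : ((dotR ((Quotient.out x : dualLattice L) : Fin n → ℝ)
            ((Quotient.out x : dualLattice L) : Fin n → ℝ) : ℝ) : ℂ)
          - ((dotR ((Quotient.out y : dualLattice L) : Fin n → ℝ)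
            ((Quotient.out y : dualLattice L) : Fin n → ℝ) : ℝ) : ℂ) = 2 * m := by
        exact_mod_cast hm
      push_cast
      linear_combination (-(Real.pi : ℂ) * Complex.I) * hmC
    · rw [if_neg h, zero_mul, mul_zero]
  · -- the (0,0) entry
    have h0 : ((Quotient.out (0 : latQuot L) : dualLattice L) : Fin n → ℝ) ∈ L := by
      have hd := ModInvAux.diff_mem L 0 (0 : latQuot L) rfl
      simpa [ModInvAux.ov] using hd
    rw [if_pos (hLsub _ h0 _ h0)]

end
end
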